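/- Let 𝐯 be a recurrent aperiodic balanced sequence over a finite alphabet and let a be a letter occurring in 𝐯. Then there exists a positive integer k such that the set of all distances j − i, taken over all pairs i < j of consecutive occurrences of a in 𝐯, is exactly the two-element set {k, k+1}. -/

import Mathlib

open Filter
open scoped ENNReal

namespace BalancedCE

variable {α : Type*} {β : Type*}

/-- The factor of `v` of length `n` starting at position `i`. -/
def factorAt (v : ℕ → α) (i n : ℕ) : List α := (List.range n).map fun k => v (i + k)

/-- `u` is a factor of the sequence `v`. -/
def IsFactor (v : ℕ → α) (u : List α) : Prop := ∃ i, factorAt v i u.length = u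

/-- The word `w` occurs in the sequence `v` at position `i`. -/
def OccursAt (v : ℕ → α) (w : List α) (i : ℕ) : Prop := factorAt v i w.length = w

/-- A sequence is balanced if counts of each letter in equal-length factors differ by at most 1. -/
def Balanced [DecidableEq α] (v : ℕ → α) : Prop :=
  ∀ (a : α) (u w : List α), IsFactor v u → IsFactor v w → u.length = w.length →
    |(u.count a : ℤ) - (w.count a : ℤ)| ≤ 1

def EventuallyPeriodic (v : ℕ → α) : Prop :=
  ∃ p, 0 < p ∧ ∃ N, ∀ n, N ≤ n → v (n + p) = v n

def Recurrent (v : ℕ → α) : Prop :=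
  ∀ u : List α, IsFactor v u → ∀ N : ℕ, ∃ i, N ≤ i ∧ OccursAt v u i

/-- `i < j` are consecutive occurrences of the letter `a` in `v`. -/
def ConsecOcc (v : ℕ → α) (a : α) (i j : ℕ) : Prop :=
  i < j ∧ v i = a ∧ v j = a ∧ ∀ k, i < k → k < j → v k ≠ a

/-- `p` is a period of the finite word `z` (i.e. `z` is a prefix of `u^ω` with `|u| = p`). -/
def IsPeriod (z : List α) (p : ℕ) : Prop :=
  0 < p ∧ ∀ i, i + p < z.length → z[i]? = z[i + p]?

/-- The minimal period of a finite word. -/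
noncomputable def minPeriod (z : List α) : ℕ := sInf {p | IsPeriod z p}

/-- The exponent of a finite word: its length divided by its minimal period. -/
noncomputable def expE (z : List α) : ℝ≥0∞ := (z.length : ℝ≥0∞) / (minPeriod z : ℝ≥0∞)

/-- The critical exponent of a sequence: the supremum of exponents of nonempty factors. -/
noncomputable def criticalExponent (v : ℕ → α) : ℝ≥0∞ :=
  ⨆ (z : List α) (_ : IsFactor v z ∧ z ≠ []), expE z

/-- A Pansiot sequence over a `d`-letter alphabet. -/
def Pansiot (d : ℕ) (v : ℕ → α) : Prop :=
  (∀ i : ℕ, (factorAt v i (d - 1)).Nodup) ∧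
  ∀ (a : α) (i j : ℕ), ConsecOcc v a i j → v (i + 1) ≠ v (j + 1)

/-- The letter `a` has frequency `ρ` in the sequence `v`. -/
def HasFreq [DecidableEq α] (v : ℕ → α) (a : α) (ρ : ℝ) : Prop :=
  Tendsto (fun n => ((factorAt v 0 n).count a : ℝ) / n) atTop (nhds ρ)

/-- Factor complexity of a sequence. -/
noncomputable def complexity (v : ℕ → α) (n : ℕ) : ℕ :=
  Set.ncard {u : List α | IsFactor v u ∧ u.length = n}

/-- Sturmian sequences: aperiodic binary sequences of factor complexity `n + 1`.
Convention: the letter `a` is `false`, the letter `b` is `true`. -/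
def Sturmian (u : ℕ → Bool) : Prop :=
  ¬ EventuallyPeriodic u ∧ ∀ n, complexity u n = n + 1

/-- Prepending a letter to a sequence. -/
def consSeq (c : α) (v : ℕ → α) : ℕ → α := fun n =>
  match n with
  | 0 => c
  | Nat.succ m => v m

/-- A standard sequence: a Sturmian sequence `u` such that `a·u` and `b·u` are Sturmian. -/
def IsStandard (u : ℕ → Bool) : Prop :=
  Sturmian u ∧ Sturmian (consSeq false u) ∧ Sturmian (consSeq true u)

/-- The slope of a binary sequence, with the convention `ρ_b > ρ_a` (`a = false`, `b = true`). -/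
def HasSlope (u : ℕ → Bool) (θ : ℝ) : Prop :=
  ∃ ρa ρb : ℝ, HasFreq u false ρa ∧ HasFreq u true ρb ∧ ρa < ρb ∧ θ = ρa / ρb

/-- `θ` has the (infinite) continued fraction expansion `[0; a 1, a 2, a 3, …]`:
there are complete quotients' fractional parts `t n ∈ (0,1)` with `t 0 = θ` and
`1 / t n = a (n+1) + t (n+1)` for all `n`. (The value `a 0` is irrelevant.) -/
def HasCF (θ : ℝ) (a : ℕ → ℕ) : Prop :=
  ∃ t : ℕ → ℝ, t 0 = θ ∧ ∀ n, 0 < t n ∧ t n < 1 ∧ 1 / t n = (a (n + 1) : ℝ) + t (n + 1)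

/-- Number of positions `< n` where `u` takes the value `c`. -/
def countBefore (u : ℕ → Bool) (c : Bool) (n : ℕ) : ℕ :=
  ((List.range n).filter fun i => u i = c).length

/-- The colouring of a binary sequence `u` by `y` (on the `a = false` positions)
and `y'` (on the `b = true` positions). -/
def colour (u : ℕ → Bool) (y : ℕ → α) (y' : ℕ → β) : ℕ → α ⊕ β := fun n =>
  if u n = false then Sum.inl (y (countBefore u false n))
  else Sum.inr (y' (countBefore u true n))

/-- A constant gap sequence: periodic, and consecutive occurrences of each occurring
letter are at a constant distance. -/
def ConstantGap (y : ℕ → α) : Prop :=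
  (∃ p, 0 < p ∧ ∀ n, y (n + p) = y n) ∧
  ∀ c : α, (∃ i, y i = c) → ∃ g, 0 < g ∧ ∀ i j, ConsecOcc y c i j → j - i = g

/-- The discolouration (projection) map: letters of the first alphabet go to `a = false`,
letters of the second alphabet go to `b = true`. -/
def proj : α ⊕ β → Bool := Sum.elim (fun _ => false) (fun _ => true)

/-- `v` is a return word to `w` in the sequence `z`. -/
def IsReturnWord (z : ℕ → α) (w v : List α) : Prop :=
  ∃ i j : ℕ, i < j ∧ OccursAt z w i ∧ OccursAt z w j ∧
    (∀ k, i < k → k < j → ¬ OccursAt z w k) ∧ v = factorAt z i (j - i)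

def RightSpecial (z : ℕ → α) (w : List α) : Prop :=
  ∃ a b : α, a ≠ b ∧ IsFactor z (w ++ [a]) ∧ IsFactor z (w ++ [b])

def LeftSpecial (z : ℕ → α) (w : List α) : Prop :=
  ∃ a b : α, a ≠ b ∧ IsFactor z (a :: w) ∧ IsFactor z (b :: w)

def Bispecial (z : ℕ → α) (w : List α) : Prop := LeftSpecial z w ∧ RightSpecial z w

/-- `o` enumerates, in increasing order, all occurrences of `w` in `z`. -/
def IsOccEnum (z : ℕ → α) (w : List α) (o : ℕ → ℕ) : Prop :=
  StrictMono o ∧ (∀ n, OccursAt z w (o n)) ∧ ∀ i, OccursAt z w i → ∃ n, o n = i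

/-- The derived sequence of `z` with respect to the occurrence enumeration `o` of a factor:
its `n`-th letter is the return word between the `n`-th and `(n+1)`-st occurrences. -/
def derivedSeq (z : ℕ → α) (o : ℕ → ℕ) : ℕ → List α :=
  fun n => factorAt z (o n) (o (n + 1) - o n)

/-- The slope of a sequence over a two-letter alphabet:
the ratio of the smaller letter frequency to the larger one. -/
def HasSlope2 {γ : Type*} [DecidableEq γ] (z : ℕ → γ) (θ : ℝ) : Prop :=
  ∃ (c c' : γ) (ρ ρ' : ℝ), c ≠ c' ∧ (∀ n, z n = c ∨ z n = c') ∧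
    HasFreq z c ρ ∧ HasFreq z c' ρ' ∧ ρ < ρ' ∧ θ = ρ / ρ'

/-- The purely cyclic constant gap sequence `(0 1 ⋯ (δ-1))^ω` over `ZMod δ`. -/
def cyc (δ : ℕ) : ℕ → ZMod δ := fun n => (n : ZMod δ)

/-- The colouring `colour(u, (1 2 ⋯ δ)^ω, (1' 2' ⋯ δ')^ω)` over `2δ` letters. -/
def colourCyc (δ : ℕ) (u : ℕ → Bool) : ℕ → ZMod δ ⊕ ZMod δ := colour u (cyc δ) (cyc δ)


section Aux

variable {α : Type*} [DecidableEq α]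

/-- count of letter `c` in the window `[p, p+n)` of `v`. -/
def cnt (v : ℕ → α) (c : α) (p n : ℕ) : ℕ :=
  ((Finset.range n).filter (fun i => v (p + i) = c)).card

lemma cnt_le (v : ℕ → α) (c : α) (p n : ℕ) : cnt v c p n ≤ n := by
  classical
  exact (Finset.card_filter_le _ _).trans (by simp)

lemma cnt_succ (v : ℕ → α) (c : α) (p n : ℕ) :
    cnt v c p (n + 1) = cnt v c p n + (if v (p + n) = c then 1 else 0) := by
  classical
  unfold cnt
  rw [Finset.range_add_one, Finset.filter_insert]
  by_cases h : v (p + n) = c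
  · simp [h, Finset.card_insert_of_notMem, Finset.mem_filter]
  · simp [h]

lemma cnt_zero (v : ℕ → α) (c : α) (p : ℕ) : cnt v c p 0 = 0 := by simp [cnt]

lemma cnt_add (v : ℕ → α) (c : α) (p m n : ℕ) :
    cnt v c p (m + n) = cnt v c p m + cnt v c (p + m) n := by
  induction n with
  | zero => simp [cnt_zero]
  | succ n ih =>
      rw [← Nat.add_assoc, cnt_succ, ih, cnt_succ, Nat.add_assoc]
      congr 2
      rw [Nat.add_assoc]

lemma cnt_mono (v : ℕ → α) (c : α) (p : ℕ) {m n : ℕ} (h : m ≤ n) :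
    cnt v c p m ≤ cnt v c p n := by
  obtain ⟨d, rfl⟩ := Nat.exists_eq_add_of_le h
  rw [cnt_add]; omega

lemma length_factorAt (v : ℕ → α) (p n : ℕ) : (factorAt v p n).length = n := by
  simp [factorAt]

lemma cnt_eq_count (v : ℕ → α) (c : α) (p n : ℕ) :
    (factorAt v p n).count c = cnt v c p n := by
  induction n with
  | zero => simp [factorAt, cnt_zero]
  | succ n ih =>
      rw [cnt_succ, ← ih]
      unfold factorAt
      rw [List.range_succ, List.map_append]
      rw [List.count_append]
      congr 1
      by_cases h : v (p + n) = c <;>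
        simp [h, List.count_singleton, List.count_cons, List.count_nil]

lemma isFactor_factorAt (v : ℕ → α) (p n : ℕ) : IsFactor v (factorAt v p n) :=
  ⟨p, by rw [length_factorAt]⟩

/-- the balance property for window counts -/
lemma bal_cnt {v : ℕ → α} (hbal : Balanced v) (c : α) (p q n : ℕ) :
    (cnt v c p n : ℤ) - cnt v c q n ≤ 1 := by
  have h := hbal c (factorAt v p n) (factorAt v q n) (isFactor_factorAt v p n)
    (isFactor_factorAt v q n) (by rw [length_factorAt, length_factorAt])
  rw [cnt_eq_count, cnt_eq_count] at h
  exact (abs_le.mp h).2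

/-- every letter occurring in a recurrent sequence occurs beyond every bound -/
lemma occ_unbounded {v : ℕ → α} (hrec : Recurrent v) (c : α) (h : ∃ i, v i = c) :
    ∀ N, ∃ i, N ≤ i ∧ v i = c := by
  obtain ⟨i, hi⟩ := h
  intro N
  have hf : IsFactor v [c] := ⟨i, by simp [factorAt, List.range_succ, hi]⟩
  obtain ⟨j, hj, hocc⟩ := hrec [c] hf N
  refine ⟨j, hj, ?_⟩
  have h2 : factorAt v j 1 = [c] := hocc
  simpa [factorAt, List.range_succ] using h2

/-- existence of the next occurrence, giving a consecutive pair -/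
lemma exists_consec {v : ℕ → α} (hrec : Recurrent v) (c : α) {i : ℕ} (hi : v i = c) :
    ∃ j, ConsecOcc v c i j := by
  have hunb := occ_unbounded hrec c ⟨i, hi⟩
  have hex : ∃ j, i < j ∧ v j = c := by
    obtain ⟨j, hj, hjc⟩ := hunb (i + 1); exact ⟨j, by omega, hjc⟩
  classical
  let j := Nat.find hex
  have hj := Nat.find_spec hex
  refine ⟨j, hj.1, hi, hj.2, fun x hx1 hx2 hxc => ?_⟩
  have : j ≤ x := Nat.find_le ⟨hx1, hxc⟩
  omega

/-- Part 1 : any two gaps differ by at most one. -/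
lemma gap_le {v : ℕ → α} (hbal : Balanced v) (c : α) {i j i' j' : ℕ}
    (h1 : ConsecOcc v c i j) (h2 : ConsecOcc v c i' j') : j - i ≤ (j' - i') + 1 := by
  by_contra hcon
  push_neg at hcon
  obtain ⟨hij, hic, hjc, hmid⟩ := h1
  obtain ⟨hij', hic', hjc', _⟩ := h2
  set g := j - i with hg
  set h' := j' - i' with hh'
  have hgh : h' + 2 ≤ g := by omega
  -- window 1 : inside the gap (i, j), length h'+1, contains no c
  have hw1 : cnt v c (i + 1) (h' + 1) = 0 := by
    unfold cnt
    rw [Finset.card_eq_zero, Finset.filter_eq_empty_iff]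
    intro t ht
    rw [Finset.mem_range] at ht
    exact hmid (i + 1 + t) (by omega) (by omega)
  -- window 2 : [i', i'+h'], length h'+1, contains c at both ends
  have hw2 : 2 ≤ cnt v c i' (h' + 1) := by
    have hsub : ({0, h'} : Finset ℕ) ⊆ (Finset.range (h' + 1)).filter (fun t => v (i' + t) = c) := by
      intro x hx
      simp only [Finset.mem_insert, Finset.mem_singleton] at hx
      rcases hx with rfl | rfl
      · simp [Finset.mem_filter, hic']
      · have hj'eq : i' + h' = j' := by omega
        rw [Finset.mem_filter, Finset.mem_range, hj'eq]
        exact ⟨by omega, hjc'⟩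
    have hcard : ({0, h'} : Finset ℕ).card = 2 := by
      rw [Finset.card_insert_of_notMem (by simp; omega), Finset.card_singleton]
    calc 2 = ({0, h'} : Finset ℕ).card := hcard.symm
    _ ≤ _ := Finset.card_le_card hsub
  have := bal_cnt hbal c i' (i + 1) (h' + 1)
  rw [hw1] at this
  push_cast at this
  omega

end Aux

section Part2

variable {α : Type*} [DecidableEq α]

/-- A letter whose occurrence set is eventually periodic. -/
def Rigid (v : ℕ → α) (c : α) : Prop :=
  ∃ L, 0 < L ∧ ∃ P, ∀ p, P ≤ p → (v (p + L) = c ↔ v p = c)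

lemma rigid_of_bounded {v : ℕ → α} {c : α} (h : ∃ B, ∀ p, B ≤ p → v p ≠ c) :
    Rigid v c := by
  obtain ⟨B, hB⟩ := h
  exact ⟨1, Nat.one_pos, B, fun p hp => iff_of_false (hB (p + 1) (by omega)) (hB p hp)⟩

lemma nonrigid_unbounded {v : ℕ → α} {c : α} (h : ¬ Rigid v c) :
    ∀ N, ∃ p, N ≤ p ∧ v p = c := by
  intro N
  by_contra hcon
  push_neg at hcon
  exact h (rigid_of_bounded ⟨N, fun p hp => hcon p hp⟩)

/-- If every letter is rigid, the sequence is eventually periodic. -/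
lemma ep_of_all_rigid [Fintype α] {v : ℕ → α} (h : ∀ c, Rigid v c) :
    EventuallyPeriodic v := by
  classical
  choose L hL P hP using h
  set Q := ∏ c ∈ Finset.univ, L c with hQ
  have hQpos : 0 < Q := Finset.prod_pos (fun c _ => hL c)
  set P1 := Finset.univ.sup P with hP1
  have iter : ∀ (c : α) (m p : ℕ), P c ≤ p → (v (p + m * L c) = c ↔ v p = c) := by
    intro c m
    induction m with
    | zero => intro p _; simp
    | succ m ih =>
        intro p hp
        have h1 : v (p + m * L c + L c) = c ↔ v (p + m * L c) = c := hP c _ (by omega)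
        have h2 := ih p hp
        constructor
        · intro hx
          apply h2.mp; apply h1.mp
          convert hx using 2; ring
        · intro hx
          have := h1.mpr (h2.mpr hx)
          convert this using 2; ring
  refine ⟨Q, hQpos, P1, fun n hn => ?_⟩
  set c := v n with hc
  have hdvd : L c ∣ Q := Finset.dvd_prod_of_mem _ (Finset.mem_univ c)
  have hPc : P c ≤ n := le_trans (Finset.le_sup (Finset.mem_univ c)) hn
  have := (iter c (Q / L c) n hPc).mpr rfl
  rwa [Nat.div_mul_cancel hdvd] at this

/-- a letter with constant gap `k` is rigid -/
lemma rigid_of_const_gap {v : ℕ → α} (hrec : Recurrent v) {a : α} {i0 : ℕ} (hi0 : v i0 = a)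
    {k : ℕ} (hk : 0 < k) (hgap : ∀ i j, ConsecOcc v a i j → j - i = k) : Rigid v a := by
  have step1 : ∀ i, v i = a → v (i + k) = a ∧ ∀ x, i < x → x < i + k → v x ≠ a := by
    intro i hi
    obtain ⟨j, hj⟩ := exists_consec hrec a hi
    have hgk := hgap i j hj
    obtain ⟨hij, _, hja, hmid⟩ := hj
    have hjk : j = i + k := by omega
    rw [hjk] at hja hmid
    exact ⟨hja, hmid⟩
  have step2 : ∀ m, v (i0 + m * k) = a := by
    intro m
    induction m with
    | zero => simpa using hi0
    | succ m ih =>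
        have := (step1 _ ih).1
        convert this using 2; ring
  have step3 : ∀ p, i0 ≤ p → (v p = a ↔ (p - i0) % k = 0) := by
    intro p hp
    constructor
    · intro hpa
      set m := (p - i0) / k with hm
      have hdm : m * k + (p - i0) % k = p - i0 := by
        rw [hm, mul_comm]; exact Nat.div_add_mod _ _
      have hmod := Nat.mod_lt (p - i0) hk
      by_contra hne
      have hlt : i0 + m * k < p := by omega
      have hlt2 : p < i0 + m * k + k := by omega
      exact (step1 _ (step2 m)).2 p hlt hlt2 hpa
    · intro hmod
      have hdm : ((p - i0) / k) * k + (p - i0) % k = p - i0 := by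
        rw [mul_comm]; exact Nat.div_add_mod _ _
      have : p = i0 + ((p - i0) / k) * k := by omega
      rw [this]; exact step2 _
  refine ⟨k, hk, i0, fun p hp => ?_⟩
  rw [step3 (p + k) (by omega), step3 p hp]
  have : p + k - i0 = (p - i0) + k := by omega
  rw [this, Nat.add_mod_right]


section CoreA

variable {α : Type*} [DecidableEq α] {v : ℕ → α}

/-- minimal window count of letter `c` over windows of length `L` -/
noncomputable def cmin (v : ℕ → α) (c : α) (L : ℕ) : ℕ :=
  sInf {m | ∃ p, cnt v c p L = m}

lemma cmin_spec (c : α) (L : ℕ) : ∃ p, cnt v c p L = cmin v c L := by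
  have h : {m | ∃ p, cnt v c p L = m}.Nonempty := ⟨cnt v c 0 L, 0, rfl⟩
  exact Nat.sInf_mem h

lemma cmin_le (c : α) (L p : ℕ) : cmin v c L ≤ cnt v c p L :=
  Nat.sInf_le ⟨p, rfl⟩

lemma cnt_le_cmin (hbal : Balanced v) (c : α) (L p : ℕ) :
    cnt v c p L ≤ cmin v c L + 1 := by
  obtain ⟨p0, hp0⟩ := cmin_spec (v := v) c L
  have := bal_cnt hbal c p p0 L
  rw [hp0] at this
  omega

lemma cnt_two_val (hbal : Balanced v) (c : α) (L p : ℕ) :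
    cnt v c p L = cmin v c L ∨ cnt v c p L = cmin v c L + 1 := by
  have h1 := cmin_le (v := v) c L p
  have h2 := cnt_le_cmin hbal c L p
  omega

lemma cmin_zero (c : α) : cmin v c 0 = 0 := by
  have := cmin_le (v := v) c 0 0
  have : cnt v c 0 0 = 0 := cnt_zero v c 0
  have h2 := cmin_le (v := v) c 0 0
  omega

lemma cmin_superadd (c : α) (m n : ℕ) :
    cmin v c m + cmin v c n ≤ cmin v c (m + n) := by
  obtain ⟨p, hp⟩ := cmin_spec (v := v) c (m + n)
  rw [← hp, cnt_add]
  exact Nat.add_le_add (cmin_le c m p) (cmin_le c n (p + m))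

lemma cmin_subadd (hbal : Balanced v) (c : α) (m n : ℕ) :
    cmin v c (m + n) ≤ cmin v c m + cmin v c n + 1 := by
  obtain ⟨p, hp⟩ := cmin_spec (v := v) c m
  calc cmin v c (m + n) ≤ cnt v c p (m + n) := cmin_le c (m + n) p
  _ = cnt v c p m + cnt v c (p + m) n := cnt_add v c p m n
  _ ≤ cmin v c m + (cmin v c n + 1) := Nat.add_le_add hp.le (cnt_le_cmin hbal c n (p + m))
  _ = _ := by ring

lemma cmin_le_len (c : α) (L : ℕ) : cmin v c L ≤ L := by
  obtain ⟨p, hp⟩ := cmin_spec (v := v) c L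
  rw [← hp]; exact cnt_le v c p L

lemma cmin_mul_le (c : α) (n m : ℕ) : n * cmin v c m ≤ cmin v c (n * m) := by
  induction n with
  | zero => simp [cmin_zero]
  | succ n ih =>
      have h1 := cmin_superadd (v := v) c (n * m) m
      calc (n + 1) * cmin v c m = n * cmin v c m + cmin v c m := by ring
      _ ≤ cmin v c (n * m) + cmin v c m := by omega
      _ ≤ cmin v c (n * m + m) := h1
      _ = cmin v c ((n + 1) * m) := by ring_nf

lemma cmin_mul_ge (hbal : Balanced v) (c : α) (n m : ℕ) (hn : 1 ≤ n) :
    cmin v c (n * m) ≤ n * cmin v c m + (n - 1) := by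
  induction n with
  | zero => omega
  | succ n ih =>
      rcases Nat.eq_zero_or_pos n with rfl | hn'
      · simpa using le_refl _
      · have h1 : cmin v c (n * m + m) ≤ cmin v c (n * m) + cmin v c m + 1 :=
          cmin_subadd hbal c (n * m) m
        have h2 := ih hn'
        have : (n + 1) * m = n * m + m := by ring
        rw [this]
        calc cmin v c (n * m + m) ≤ cmin v c (n * m) + cmin v c m + 1 := h1
        _ ≤ (n * cmin v c m + (n - 1)) + cmin v c m + 1 := by omega
        _ = (n + 1) * cmin v c m + ((n + 1) - 1) := by cases n with
            | zero => omega
            | succ k => ring_nf; omega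

/-- the frequency of letter `c` -/
noncomputable def rho (v : ℕ → α) (c : α) : ℝ :=
  sSup {x : ℝ | ∃ m : ℕ, 1 ≤ m ∧ x = (cmin v c m : ℝ) / m}

lemma rho_set_nonempty (c : α) :
    {x : ℝ | ∃ m : ℕ, 1 ≤ m ∧ x = (cmin v c m : ℝ) / m}.Nonempty :=
  ⟨(cmin v c 1 : ℝ) / ((1:ℕ):ℝ), 1, le_refl _, rfl⟩

lemma rho_set_bdd (c : α) :
    BddAbove {x : ℝ | ∃ m : ℕ, 1 ≤ m ∧ x = (cmin v c m : ℝ) / m} := by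
  refine ⟨1, fun x hx => ?_⟩
  obtain ⟨m, hm, rfl⟩ := hx
  have h1 : (cmin v c m : ℝ) ≤ m := by exact_mod_cast cmin_le_len c m
  have h2 : (0:ℝ) < m := by exact_mod_cast hm
  rw [div_le_one h2]; exact h1

lemma le_rho (c : α) (m : ℕ) (hm : 1 ≤ m) : (cmin v c m : ℝ) ≤ m * rho v c := by
  have h2 : (0:ℝ) < m := by exact_mod_cast hm
  have := le_csSup (rho_set_bdd (v := v) c) (⟨m, hm, rfl⟩ :
    (cmin v c m : ℝ) / m ∈ {x : ℝ | ∃ m : ℕ, 1 ≤ m ∧ x = (cmin v c m : ℝ) / m})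
  rw [div_le_iff₀ h2] at this
  rw [rho]
  linarith [this]

lemma rho_le (hbal : Balanced v) (c : α) (m : ℕ) (hm : 1 ≤ m) :
    m * rho v c ≤ (cmin v c m : ℝ) + 1 := by
  have h2 : (0:ℝ) < m := by exact_mod_cast hm
  have hsup : rho v c ≤ ((cmin v c m : ℝ) + 1) / m := by
    apply csSup_le (rho_set_nonempty c)
    rintro x ⟨n, hn, rfl⟩
    have h3 : (0:ℝ) < n := by exact_mod_cast hn
    rw [div_le_div_iff₀ h3 h2]
    have k1 : m * cmin v c n ≤ cmin v c (m * n) := cmin_mul_le c m n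
    have k2 : cmin v c (m * n) ≤ m * cmin v c n + (m - 1) := cmin_mul_ge hbal c m n hm
    have k3 : cmin v c (n * m) ≤ n * cmin v c m + (n - 1) := cmin_mul_ge hbal c n m hn
    have k4 : m * cmin v c n ≤ n * cmin v c m + (n - 1) := by
      rw [mul_comm m n] at k1; omega
    have k5 : m * cmin v c n + 1 ≤ n * (cmin v c m + 1) := by
      have : n - 1 + 1 ≤ n := by omega
      calc m * cmin v c n + 1 ≤ n * cmin v c m + (n - 1) + 1 := by omega
      _ ≤ n * cmin v c m + n := by omega
      _ = n * (cmin v c m + 1) := by ring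
    have k6 : cmin v c n * m ≤ n * (cmin v c m + 1) := by
      have : cmin v c n * m = m * cmin v c n := by ring
      omega
    calc (cmin v c n : ℝ) * m = ((cmin v c n * m : ℕ) : ℝ) := by push_cast; ring
    _ ≤ ((n * (cmin v c m + 1) : ℕ) : ℝ) := by exact_mod_cast k6
    _ = ((cmin v c m : ℝ) + 1) * n := by push_cast; ring
  calc (m:ℝ) * rho v c ≤ m * (((cmin v c m : ℝ) + 1) / m) := by
        apply mul_le_mul_of_nonneg_left hsup h2.le
  _ = (cmin v c m : ℝ) + 1 := by field_simp

end CoreA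


section CoreB

variable {α : Type*} [DecidableEq α] {v : ℕ → α}

lemma cnt_one (c : α) (p : ℕ) : cnt v c p 1 = if v p = c then 1 else 0 := by
  have := cnt_succ v c p 0
  rw [cnt_zero] at this
  simpa using this

lemma rigid_of_cnt_eventually_const {c : α} {L : ℕ} (hL : 0 < L) {N : ℕ}
    (h : ∀ p, N ≤ p → cnt v c p L = cnt v c (p + 1) L) : Rigid v c := by
  refine ⟨L, hL, N, fun p hp => ?_⟩
  have h1 : cnt v c p (L + 1) = cnt v c p L + (if v (p + L) = c then 1 else 0) :=
    cnt_succ v c p L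
  have h2 : cnt v c p (L + 1) = cnt v c p 1 + cnt v c (p + 1) L := by
    rw [Nat.add_comm L 1]; exact cnt_add v c p 1 L
  rw [cnt_one] at h2
  have h3 := h p hp
  by_cases hA : v (p + L) = c <;> by_cases hB : v p = c <;>
    simp [hA, hB] at h1 h2 ⊢ <;> omega

lemma nonrigid_both (hbal : Balanced v) {c : α} (hnc : ¬ Rigid v c) (L : ℕ) (hL : 0 < L) :
    ∀ N, (∃ p, N ≤ p ∧ cnt v c p L = cmin v c L) ∧
      (∃ p, N ≤ p ∧ cnt v c p L = cmin v c L + 1) := by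
  intro N
  have hne : ∃ p, N ≤ p ∧ cnt v c p L ≠ cnt v c (p + 1) L := by
    by_contra hcon
    push_neg at hcon
    exact hnc (rigid_of_cnt_eventually_const hL hcon)
  obtain ⟨p, hp, hpe⟩ := hne
  rcases cnt_two_val hbal c L p with h1 | h1 <;>
    rcases cnt_two_val hbal c L (p + 1) with h2 | h2
  · exact absurd (h1.trans h2.symm) hpe
  · exact ⟨⟨p, hp, h1⟩, ⟨p + 1, by omega, h2⟩⟩
  · exact ⟨⟨p + 1, by omega, h2⟩, ⟨p, hp, h1⟩⟩
  · exact absurd (h1.trans h2.symm) hpe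

lemma exists_pair_same_res {Pred : ℕ → Prop} (h : ∀ N, ∃ p, N ≤ p ∧ Pred p)
    (q : ℕ) (hq : 0 < q) :
    ∃ p1 p2, p1 < p2 ∧ q ∣ (p2 - p1) ∧ Pred p1 ∧ Pred p2 := by
  classical
  -- build a strictly increasing sequence of witnesses
  let g : ℕ → ℕ := fun n => Nat.rec (h 0).choose (fun _ prev => (h (prev + 1)).choose) n
  have hg0 : Pred (g 0) := (h 0).choose_spec.2
  have hgs : ∀ n, g n < g (n + 1) ∧ Pred (g (n + 1)) := by
    intro n
    have hdef : g (n + 1) = (h (g n + 1)).choose := rfl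
    have hspec := (h (g n + 1)).choose_spec
    rw [hdef]
    exact ⟨by have := hspec.1; omega, hspec.2⟩
  have hmono : StrictMono g := strictMono_nat_of_lt_succ (fun n => (hgs n).1)
  have hpred : ∀ n, Pred (g n) := by
    intro n; cases n with
    | zero => exact hg0
    | succ n => exact (hgs n).2
  have hcard : (Finset.range q).card < (Finset.range (q + 1)).card := by
    simp
  have hmaps : ∀ n ∈ Finset.range (q + 1), g n % q ∈ Finset.range q :=
    fun n _ => Finset.mem_range.mpr (Nat.mod_lt _ hq)
  obtain ⟨x, hx, y, hy, hxy, hfeq⟩ :=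
    Finset.exists_ne_map_eq_of_card_lt_of_maps_to hcard hmaps
  rcases Nat.lt_or_ge x y with hlt | hge
  · have hglt := hmono hlt
    refine ⟨g x, g y, hglt, ?_, hpred x, hpred y⟩
    exact Nat.dvd_of_mod_eq_zero (Nat.sub_mod_eq_zero_of_mod_eq hfeq.symm)
  · have hlt : y < x := by omega
    have hglt := hmono hlt
    refine ⟨g y, g x, hglt, ?_, hpred y, hpred x⟩
    exact Nat.dvd_of_mod_eq_zero (Nat.sub_mod_eq_zero_of_mod_eq hfeq)

lemma cnt_block (c : α) (p q M : ℕ) :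
    cnt v c p (M * q) = ∑ i ∈ Finset.range M, cnt v c (p + i * q) q := by
  induction M with
  | zero => simp [cnt_zero]
  | succ M ih =>
      have : (M + 1) * q = M * q + q := by ring
      rw [this, cnt_add, ih, Finset.sum_range_succ]

lemma pinch_up (hbal : Balanced v) {c : α} (hnc : ¬ Rigid v c) (q : ℕ) (hq : 0 < q) :
    ∃ M, 1 ≤ M ∧ M * cmin v c q + 1 ≤ cmin v c (M * q) := by
  obtain ⟨p1, p2, hlt, hdvd, h1, h2⟩ :=
    exists_pair_same_res (fun N => (nonrigid_both hbal hnc q hq N).2) q hq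
  obtain ⟨d, hd⟩ := hdvd
  have hd1 : 1 ≤ d := by
    rcases Nat.eq_zero_or_pos d with rfl | h
    · omega
    · exact h
  refine ⟨d + 1, by omega, ?_⟩
  have hsum : cnt v c p1 ((d + 1) * q) = ∑ i ∈ Finset.range (d + 1), cnt v c (p1 + i * q) q :=
    cnt_block c p1 q (d + 1)
  have hterm : ∀ i ∈ Finset.range (d + 1), cmin v c q ≤ cnt v c (p1 + i * q) q :=
    fun i _ => cmin_le c q _
  have hkey : (d + 1) * cmin v c q + 2 ≤ cnt v c p1 ((d + 1) * q) := by
    rw [hsum]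
    have hf : ∀ i ∈ Finset.range (d + 1),
        (0:ℕ) ≤ cnt v c (p1 + i * q) q - cmin v c q := fun i _ => Nat.zero_le _
    have h0mem : (0:ℕ) ∈ Finset.range (d + 1) := by simp
    have hdmem : d ∈ Finset.range (d + 1) := by simp
    have hne : (0:ℕ) ≠ d := by omega
    have hsplit : ∀ i ∈ Finset.range (d + 1),
        cnt v c (p1 + i * q) q = cmin v c q + (cnt v c (p1 + i * q) q - cmin v c q) := by
      intro i _
      have := cmin_le (v := v) c q (p1 + i * q)
      omega
    rw [Finset.sum_congr rfl hsplit, Finset.sum_add_distrib]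
    have hsum2 : 2 ≤ ∑ i ∈ Finset.range (d + 1), (cnt v c (p1 + i * q) q - cmin v c q) := by
      have hadd := Finset.add_le_sum hf h0mem hdmem hne
      have hp0 : p1 + 0 * q = p1 := by ring
      have e0 : 1 ≤ cnt v c (p1 + 0 * q) q - cmin v c q := by
        rw [hp0]; omega
      have hpd : p1 + d * q = p2 := by
        have hqd : d * q = q * d := by ring
        omega
      have ed : 1 ≤ cnt v c (p1 + d * q) q - cmin v c q := by
        rw [hpd]; omega
      omega
    have : ∑ _i ∈ Finset.range (d + 1), cmin v c q = (d + 1) * cmin v c q := by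
      rw [Finset.sum_const, Finset.card_range]; ring
    omega
  have := cnt_le_cmin hbal c ((d + 1) * q) p1
  omega

lemma pinch_down (hbal : Balanced v) {c : α} (hnc : ¬ Rigid v c) (q : ℕ) (hq : 0 < q) :
    ∃ M, 1 ≤ M ∧ cmin v c (M * q) + 2 ≤ M * cmin v c q + M := by
  obtain ⟨p1, p2, hlt, hdvd, h1, h2⟩ :=
    exists_pair_same_res (fun N => (nonrigid_both hbal hnc q hq N).1) q hq
  obtain ⟨d, hd⟩ := hdvd
  have hd1 : 1 ≤ d := by
    rcases Nat.eq_zero_or_pos d with rfl | h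
    · omega
    · exact h
  refine ⟨d + 1, by omega, ?_⟩
  have hsum : cnt v c p1 ((d + 1) * q) = ∑ i ∈ Finset.range (d + 1), cnt v c (p1 + i * q) q :=
    cnt_block c p1 q (d + 1)
  have hkey : cnt v c p1 ((d + 1) * q) + 2 ≤ (d + 1) * cmin v c q + (d + 1) := by
    rw [hsum]
    have hsplit : ∀ i ∈ Finset.range (d + 1),
        cnt v c (p1 + i * q) q = (cmin v c q + 1) - ((cmin v c q + 1) - cnt v c (p1 + i * q) q) := by
      intro i _
      have := cnt_le_cmin hbal c q (p1 + i * q)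
      omega
    rw [Finset.sum_congr rfl hsplit]
    have hf : ∀ i ∈ Finset.range (d + 1),
        (0:ℕ) ≤ (cmin v c q + 1) - cnt v c (p1 + i * q) q := fun i _ => Nat.zero_le _
    have h0mem : (0:ℕ) ∈ Finset.range (d + 1) := by simp
    have hdmem : d ∈ Finset.range (d + 1) := by simp
    have hne : (0:ℕ) ≠ d := by omega
    have hsum2 : 2 ≤ ∑ i ∈ Finset.range (d + 1), ((cmin v c q + 1) - cnt v c (p1 + i * q) q) := by
      have hadd := Finset.add_le_sum hf h0mem hdmem hne
      have hp0 : p1 + 0 * q = p1 := by ring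
      have e0 : 1 ≤ (cmin v c q + 1) - cnt v c (p1 + 0 * q) q := by
        rw [hp0]; omega
      have hpd : p1 + d * q = p2 := by
        have hqd : d * q = q * d := by ring
        omega
      have ed : 1 ≤ (cmin v c q + 1) - cnt v c (p1 + d * q) q := by
        rw [hpd]; omega
      omega
    have hle : ∀ i ∈ Finset.range (d + 1),
        (cmin v c q + 1) - ((cmin v c q + 1) - cnt v c (p1 + i * q) q)
          ≤ (cmin v c q + 1) := fun i _ => Nat.sub_le _ _
    calc (∑ i ∈ Finset.range (d + 1),
            ((cmin v c q + 1) - ((cmin v c q + 1) - cnt v c (p1 + i * q) q))) + 2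
        ≤ (∑ i ∈ Finset.range (d + 1),
            ((cmin v c q + 1) - ((cmin v c q + 1) - cnt v c (p1 + i * q) q))) +
          ∑ i ∈ Finset.range (d + 1), ((cmin v c q + 1) - cnt v c (p1 + i * q) q) := by omega
    _ ≤ ∑ i ∈ Finset.range (d + 1), (cmin v c q + 1) := by
          rw [← Finset.sum_add_distrib]
          apply Finset.sum_le_sum
          intro i hi
          have := cnt_le_cmin hbal c q (p1 + i * q)
          omega
    _ = (d + 1) * cmin v c q + (d + 1) := by
          rw [Finset.sum_const, Finset.card_range]; ring
  have := cmin_le (v := v) c ((d + 1) * q) p1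
  omega

lemma rho_strict (hbal : Balanced v) {c : α} (hnc : ¬ Rigid v c) (q : ℕ) (hq : 1 ≤ q) :
    (cmin v c q : ℝ) < q * rho v c ∧ q * rho v c < (cmin v c q : ℝ) + 1 := by
  constructor
  · obtain ⟨M, hM, hMk⟩ := pinch_up hbal hnc q hq
    have h1 : ((M * cmin v c q + 1 : ℕ) : ℝ) ≤ ((cmin v c (M * q) : ℕ) : ℝ) := by
      exact_mod_cast hMk
    have h2 : (cmin v c (M * q) : ℝ) ≤ (M * q) * rho v c := by
      have := le_rho (v := v) c (M * q) (Nat.mul_pos hM hq)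
      push_cast at this ⊢
      linarith
    have hMpos : (0:ℝ) < M := by exact_mod_cast hM
    push_cast at h1
    nlinarith
  · obtain ⟨M, hM, hMk⟩ := pinch_down hbal hnc q hq
    have h1 : ((cmin v c (M * q) + 2 : ℕ) : ℝ) ≤ ((M * cmin v c q + M : ℕ) : ℝ) := by
      exact_mod_cast hMk
    have h2 : ((M * q : ℕ) : ℝ) * rho v c ≤ (cmin v c (M * q) : ℝ) + 1 := by
      exact rho_le hbal c (M * q) (Nat.mul_pos hM hq)
    have hMpos : (0:ℝ) < M := by exact_mod_cast hM
    push_cast at h1 h2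
    nlinarith

lemma rho_not_int (hbal : Balanced v) {c : α} (hnc : ¬ Rigid v c) :
    ∀ n : ℕ, 1 ≤ n → ∀ z : ℤ, (n : ℝ) * rho v c ≠ (z : ℝ) := by
  intro n hn z hz
  obtain ⟨h1, h2⟩ := rho_strict hbal hnc n hn
  rw [hz] at h1 h2
  have k1 : (cmin v c n : ℤ) < z := by exact_mod_cast h1
  have k2 : z < (cmin v c n : ℤ) + 1 := by exact_mod_cast h2
  omega

end CoreB


section CoreD

variable {α : Type*} [DecidableEq α] {v : ℕ → α}

/-- discrepancy function -/
noncomputable def phi (v : ℕ → α) (c : α) (p : ℕ) : ℝ :=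
  (cnt v c 0 p : ℝ) - p * rho v c

lemma phi_diff (c : α) {p q : ℕ} (hpq : p ≤ q) :
    phi v c q - phi v c p = (cnt v c p (q - p) : ℝ) - ((q - p : ℕ) : ℝ) * rho v c := by
  have h : cnt v c 0 q = cnt v c 0 p + cnt v c p (q - p) := by
    have h2 := cnt_add v c 0 p (q - p)
    rw [Nat.add_sub_cancel' hpq] at h2
    simpa using h2
  unfold phi
  rw [h]
  have hc : ((q - p : ℕ) : ℝ) = (q : ℝ) - (p : ℝ) := by
    exact Nat.cast_sub hpq
  rw [hc]
  push_cast
  ring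

lemma phi_diff_abs (hbal : Balanced v) (c : α) (p q : ℕ) :
    |phi v c q - phi v c p| ≤ 1 := by
  have key : ∀ p q : ℕ, p ≤ q → |phi v c q - phi v c p| ≤ 1 := by
    intro p q hpq
    rcases Nat.eq_or_lt_of_le hpq with rfl | hlt
    · simp
    · set l := q - p with hl
      have hl1 : 1 ≤ l := by omega
      rw [phi_diff c hpq]
      have h1 := le_rho (v := v) c l hl1
      have h2 := rho_le hbal c l hl1
      rcases cnt_two_val hbal c l p with hv | hv <;> rw [hv] <;>
        (rw [abs_le]; push_cast; constructor <;> linarith)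
  rcases Nat.le_total p q with h | h
  · exact key p q h
  · rw [abs_sub_comm]; exact key q p h

noncomputable def beta (v : ℕ → α) (c : α) : ℝ := sInf (Set.range (phi v c))

lemma beta_bdd (hbal : Balanced v) (c : α) : BddBelow (Set.range (phi v c)) := by
  refine ⟨phi v c 0 - 1, fun x hx => ?_⟩
  obtain ⟨p, rfl⟩ := hx
  have := phi_diff_abs hbal c p 0
  rw [abs_le] at this
  linarith [this.1]

lemma beta_le (hbal : Balanced v) (c : α) (p : ℕ) : beta v c ≤ phi v c p :=
  csInf_le (beta_bdd hbal c) ⟨p, rfl⟩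

lemma phi_le_beta_add_one (hbal : Balanced v) (c : α) (p : ℕ) :
    phi v c p ≤ beta v c + 1 := by
  have h : phi v c p - 1 ≤ beta v c := by
    apply le_csInf (Set.range_nonempty _)
    rintro x ⟨q, rfl⟩
    have := phi_diff_abs hbal c q p
    rw [abs_le] at this
    linarith [this.2]
  linarith

lemma exc_of_lt (hbal : Balanced v) (c : α) {L : ℕ} (hL : 1 ≤ L) (p : ℕ)
    (h : phi v c p - beta v c < (L : ℝ) * rho v c - (cmin v c L : ℝ)) :
    cnt v c p L = cmin v c L + 1 := by
  rcases cnt_two_val hbal c L p with hv | hv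
  · exfalso
    have hd : phi v c (p + L) - phi v c p
        = (cnt v c p L : ℝ) - (L : ℝ) * rho v c := by
      have := phi_diff (v := v) c (show p ≤ p + L by omega)
      simpa using this
    rw [hv] at hd
    have hb := beta_le hbal c (p + L)
    linarith
  · exact hv

lemma exc_of_gt (hbal : Balanced v) (c : α) {L : ℕ} (hL : 1 ≤ L) (p : ℕ)
    (h : (L : ℝ) * rho v c - (cmin v c L : ℝ) < phi v c p - beta v c) :
    cnt v c p L = cmin v c L := by
  rcases cnt_two_val hbal c L p with hv | hv
  · exact hv
  · exfalso
    have hd : phi v c (p + L) - phi v c p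
        = (cnt v c p L : ℝ) - (L : ℝ) * rho v c := by
      have := phi_diff (v := v) c (show p ≤ p + L by omega)
      simpa using this
    rw [hv] at hd
    have hb := phi_le_beta_add_one hbal c (p + L)
    have hb2 := beta_le hbal c p
    push_cast at hd
    linarith

/-- fractional-part representative of the discrepancy -/
noncomputable def Ffr (v : ℕ → α) (c : α) (p : ℕ) : ℝ :=
  Int.fract (-(p : ℝ) * rho v c - beta v c)

lemma u_sub_F_int (c : α) (p : ℕ) :
    ∃ z : ℤ, phi v c p - beta v c = Ffr v c p + z := by
  refine ⟨(cnt v c 0 p : ℤ) + ⌊-(p : ℝ) * rho v c - beta v c⌋, ?_⟩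
  unfold Ffr Int.fract phi
  push_cast
  ring

lemma u_eq_F (hbal : Balanced v) (c : α) (p : ℕ) (hF : Ffr v c p ≠ 0) :
    phi v c p - beta v c = Ffr v c p := by
  obtain ⟨z, hz⟩ := u_sub_F_int (v := v) c p
  have h1 : (0:ℝ) ≤ phi v c p - beta v c := by linarith [beta_le hbal c p]
  have h2 : phi v c p - beta v c ≤ 1 := by linarith [phi_le_beta_add_one hbal c p]
  have h3 : (0:ℝ) ≤ Ffr v c p := Int.fract_nonneg _
  have h4 : Ffr v c p < 1 := Int.fract_lt_one _
  have h5 : (0:ℝ) < Ffr v c p := lt_of_le_of_ne h3 (Ne.symm hF)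
  have hz0 : z = 0 := by
    have hz1 : (z:ℝ) > -1 := by linarith
    have hz2 : (z:ℝ) < 1 := by linarith
    exact_mod_cast (by
      have k1 : (-1:ℤ) < z := by exact_mod_cast hz1
      have k2 : z < 1 := by exact_mod_cast hz2
      omega : z = (0:ℤ))
  rw [hz0] at hz
  simpa using hz

lemma F_inj (hbal : Balanced v) {c : α} (hnc : ¬ Rigid v c) {p p' : ℕ}
    (h : Ffr v c p = Ffr v c p') : p = p' := by
  by_contra hne
  have key : ∀ p p' : ℕ, p < p' → Ffr v c p = Ffr v c p' → False := by
    intro p p' hlt heq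
    unfold Ffr at heq
    rw [Int.fract_eq_fract] at heq
    obtain ⟨z, hz⟩ := heq
    have : ((p' - p : ℕ) : ℝ) * rho v c = (z : ℝ) := by
      have hcast : ((p' - p : ℕ) : ℝ) = (p' : ℝ) - p := by
        exact Nat.cast_sub hlt.le
      rw [hcast]
      linarith
    exact rho_not_int hbal hnc (p' - p) (by omega) z this
  rcases Nat.lt_or_ge p p' with hlt | hge
  · exact key p p' hlt h
  · exact key p' p (by omega) h.symm

lemma indicator_exc (hbal : Balanced v) {c : α} (hnc : ¬ Rigid v c) {L : ℕ} (hL : 1 ≤ L)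
    (p : ℕ) (h0 : Ffr v c p ≠ 0)
    (hw : Ffr v c p ≠ (L : ℝ) * rho v c - (cmin v c L : ℝ)) :
    (cnt v c p L = cmin v c L + 1 ↔ Ffr v c p < (L : ℝ) * rho v c - (cmin v c L : ℝ)) := by
  have hu := u_eq_F hbal c p h0
  rcases lt_trichotomy (Ffr v c p) ((L : ℝ) * rho v c - (cmin v c L : ℝ)) with hlt | heq | hgt
  · simp only [hlt, iff_true]
    exact exc_of_lt hbal c hL p (by rw [hu]; exact hlt)
  · exact absurd heq hw
  · have := exc_of_gt hbal c hL p (by rw [hu]; exact hgt)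
    constructor
    · intro hcon; omega
    · intro hcon; exact absurd hcon (not_lt.mpr hgt.le)

end CoreD



set_option maxHeartbeats 1000000 in
/-- counting lattice-interval hits of an arithmetic progression with positive step -/
lemma line_count {x0 σ w : ℝ} (hσ : 0 < σ) (hw0 : 0 < w) (hw1 : w ≤ 1) (S : ℕ) :
    |(((Finset.range S).filter (fun s : ℕ => Int.fract (x0 + s * σ) < w)).card : ℝ) - S * w|
      ≤ S * σ + 3 / σ + 3 := by
  classical
  have hC0 : (0:ℝ) ≤ 3 / σ := by positivity
  rcases Nat.eq_zero_or_pos S with rfl | hS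
  · have h0 : ((Finset.range 0).filter (fun s : ℕ => Int.fract (x0 + s * σ) < w)).card = 0 := by
      simp
    rw [h0]
    norm_num
    positivity
  set mlo : ℤ := ⌊x0 - w⌋ + 1 with hmlo
  set mhi : ℤ := ⌊x0 + S * σ⌋ with hmhi
  set cond : ℤ → ℕ → Prop := fun m s => x0 + s * σ - w < (m : ℝ) ∧ (m : ℝ) ≤ x0 + s * σ
    with hcond
  have step1 : ∀ s ∈ Finset.range S,
      ((Finset.Icc mlo mhi).filter (fun m => cond m s)).card
        = if Int.fract (x0 + s * σ) < w then 1 else 0 := by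
    intro s hs
    rw [Finset.mem_range] at hs
    set x := x0 + s * σ with hx
    have hxlo : x0 ≤ x := by
      have : (0:ℝ) ≤ s * σ := by positivity
      linarith
    have hxhi : x ≤ x0 + S * σ := by
      have h1 : (s:ℝ) ≤ S := by exact_mod_cast hs.le
      have : (s:ℝ) * σ ≤ S * σ := by nlinarith
      linarith
    have hset : (Finset.Icc mlo mhi).filter (fun m => cond m s)
        = Finset.Ioc ⌊x - w⌋ ⌊x⌋ := by
      ext m
      simp only [Finset.mem_filter, Finset.mem_Icc, Finset.mem_Ioc, hcond]
      constructor
      · rintro ⟨⟨_, _⟩, hc1, hc2⟩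
        exact ⟨Int.floor_lt.mpr hc1, Int.le_floor.mpr hc2⟩
      · rintro ⟨h1, h2⟩
        have hc1 : x - w < (m:ℝ) := by
          have := Int.lt_floor_add_one (x - w)
          have h1' : ⌊x - w⌋ + 1 ≤ m := h1
          have : ((⌊x - w⌋ : ℤ) : ℝ) + 1 ≤ m := by exact_mod_cast h1'
          nlinarith [Int.floor_le (x - w)]
        have hc2 : (m:ℝ) ≤ x := by
          have := Int.floor_le x
          have h2' : ((m:ℤ):ℝ) ≤ ((⌊x⌋ : ℤ) : ℝ) := by exact_mod_cast h2
          linarith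
        refine ⟨⟨?_, ?_⟩, hc1, hc2⟩
        · rw [hmlo]
          have hmono : ⌊x0 - w⌋ ≤ ⌊x - w⌋ := Int.floor_le_floor (by linarith)
          omega
        · rw [hmhi]
          exact le_trans h2 (Int.floor_le_floor hxhi)
    rw [hset, Int.card_Ioc]
    by_cases h : Int.fract x < w
    · have hlt : ⌊x - w⌋ < ⌊x⌋ := by
        apply Int.floor_lt.mpr
        have := Int.fract_nonneg x
        unfold Int.fract at h
        push_cast
        linarith
      have hge : ⌊x⌋ - 1 ≤ ⌊x - w⌋ := by
        apply Int.le_floor.mpr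
        push_cast
        have := Int.floor_le x
        linarith
      rw [if_pos h]
      omega
    · push_neg at h
      have hge : ⌊x⌋ ≤ ⌊x - w⌋ := by
        apply Int.le_floor.mpr
        have := Int.floor_le x
        unfold Int.fract at h
        push_cast
        linarith
      rw [if_neg h.not_gt]
      omega
  -- swap the double count
  have step2 : (((Finset.range S).filter (fun s : ℕ => Int.fract (x0 + s * σ) < w)).card : ℕ)
      = ∑ m ∈ Finset.Icc mlo mhi, ((Finset.range S).filter (fun s => cond m s)).card := by
    rw [Finset.card_filter]
    calc ∑ s ∈ Finset.range S, (if Int.fract (x0 + s * σ) < w then 1 else 0)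
        = ∑ s ∈ Finset.range S, ((Finset.Icc mlo mhi).filter (fun m => cond m s)).card := by
          apply Finset.sum_congr rfl
          intro s hs
          rw [step1 s hs]
      _ = ∑ s ∈ Finset.range S, ∑ m ∈ Finset.Icc mlo mhi, (if cond m s then 1 else 0) := by
          apply Finset.sum_congr rfl
          intro s _
          rw [Finset.card_filter]
      _ = ∑ m ∈ Finset.Icc mlo mhi, ∑ s ∈ Finset.range S, (if cond m s then 1 else 0) :=
          Finset.sum_comm
      _ = _ := by
          apply Finset.sum_congr rfl
          intro m _
          rw [Finset.card_filter]
  -- per-m upper bound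
  have step3 : ∀ m : ℤ, (((Finset.range S).filter (fun s => cond m s)).card : ℝ) ≤ w / σ + 1 := by
    intro m
    set T := (Finset.range S).filter (fun s => cond m s) with hT
    rcases T.eq_empty_or_nonempty with he | hne
    · rw [he]; simp; positivity
    · set s1 := T.min' hne with hs1
      set s2 := T.max' hne with hs2
      have h1 : s1 ∈ T := T.min'_mem hne
      have h2 : s2 ∈ T := T.max'_mem hne
      have hs12 : s1 ≤ s2 := T.min'_le s2 h2
      rw [hT, Finset.mem_filter] at h1 h2
      have hc1 : (m:ℝ) ≤ x0 + s1 * σ := h1.2.2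
      have hc2 : x0 + s2 * σ - w < (m:ℝ) := h2.2.1
      have hlen : ((s2 : ℝ) - s1) * σ < w := by nlinarith
      have hsub : T ⊆ Finset.Icc s1 s2 := by
        intro s hsmem
        rw [Finset.mem_Icc]
        exact ⟨T.min'_le s hsmem, T.le_max' s hsmem⟩
      have hcard : T.card ≤ s2 + 1 - s1 := by
        have := Finset.card_le_card hsub
        rwa [Nat.card_Icc] at this
      have hcast : (T.card : ℝ) ≤ (s2 : ℝ) - s1 + 1 := by
        have h3 : ((s2 + 1 - s1 : ℕ) : ℝ) = (s2:ℝ) + 1 - s1 := by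
          push_cast [Nat.cast_sub (by omega : s1 ≤ s2 + 1)]
          ring
        calc (T.card : ℝ) ≤ ((s2 + 1 - s1 : ℕ) : ℝ) := by exact_mod_cast hcard
        _ = (s2:ℝ) + 1 - s1 := h3
        _ = (s2 : ℝ) - s1 + 1 := by ring
      have : (s2 : ℝ) - s1 < w / σ := by
        rw [lt_div_iff₀ hσ]
        linarith
      linarith
  -- global upper bound
  have hcards : ((Finset.Icc mlo mhi).card : ℝ) ≤ S * σ + 2 := by
    rw [Int.card_Icc]
    have h1 : mhi + 1 - mlo ≤ ⌊x0 + S * σ⌋ - ⌊x0 - w⌋ := by omega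
    rcases le_or_gt (mhi + 1 - mlo) 0 with h | h
    · have : (mhi + 1 - mlo).toNat = 0 := Int.toNat_of_nonpos h
      rw [this]
      have : (0:ℝ) ≤ S * σ := by positivity
      simp
      linarith
    · have h2 : ((mhi + 1 - mlo).toNat : ℝ) = ((mhi + 1 - mlo : ℤ) : ℝ) := by
        exact_mod_cast Int.toNat_of_nonneg h.le
      rw [h2]
      have h3 : ((⌊x0 + S * σ⌋ : ℤ) : ℝ) ≤ x0 + S * σ := Int.floor_le _
      have h4 : x0 - w - 1 < ((⌊x0 - w⌋ : ℤ) : ℝ) := by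
        have := Int.lt_floor_add_one (x0 - w)
        linarith
      have h5 : ((mhi + 1 - mlo : ℤ) : ℝ) = ((mhi:ℤ):ℝ) + 1 - ((mlo:ℤ):ℝ) := by push_cast; ring
      rw [h5, hmhi, hmlo]
      push_cast
      nlinarith
  have hupper : (((Finset.range S).filter (fun s : ℕ => Int.fract (x0 + s * σ) < w)).card : ℝ)
      ≤ S * w + (S * σ + 3 / σ + 3) := by
    have hcast : (((Finset.range S).filter (fun s : ℕ => Int.fract (x0 + s * σ) < w)).card : ℝ)
        = ∑ m ∈ Finset.Icc mlo mhi, (((Finset.range S).filter (fun s => cond m s)).card : ℝ) := by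
      rw [step2]; push_cast; ring
    rw [hcast]
    have hbound : ∑ m ∈ Finset.Icc mlo mhi, (((Finset.range S).filter (fun s => cond m s)).card : ℝ)
        ≤ ∑ _m ∈ Finset.Icc mlo mhi, (w / σ + 1) := by
      apply Finset.sum_le_sum
      intro m _
      exact step3 m
    rw [Finset.sum_const, nsmul_eq_mul] at hbound
    have hwσ : 0 < w / σ + 1 := by positivity
    have : ((Finset.Icc mlo mhi).card : ℝ) * (w / σ + 1) ≤ (S * σ + 2) * (w / σ + 1) := by
      nlinarith
    have hexp : (S * σ + 2) * (w / σ + 1) ≤ S * w + (S * σ + 3 / σ + 3) := by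
      have e1 : (S:ℝ) * σ * (w / σ) = S * w := by
        field_simp
      have e2 : w / σ ≤ 1 / σ := by gcongr
      have e3 : (0:ℝ) < 1 / σ := by positivity
      have e4 : 3 / σ = 3 * (1 / σ) := by ring
      have expand : (S * σ + 2) * (w / σ + 1) = S * σ * (w / σ) + S * σ + 2 * (w / σ) + 2 := by
        ring
      rw [expand, e1, e4]
      linarith
    linarith
  -- lower bound
  have hlower : S * w - (S * σ + 3 / σ + 3)
      ≤ (((Finset.range S).filter (fun s : ℕ => Int.fract (x0 + s * σ) < w)).card : ℝ) := by
    have hcnn : (0:ℝ) ≤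
        (((Finset.range S).filter (fun s : ℕ => Int.fract (x0 + s * σ) < w)).card : ℝ) :=
      Nat.cast_nonneg _
    rcases le_or_gt w σ with hwσ | hσw
    · have hS0 : (0:ℝ) ≤ S := Nat.cast_nonneg _
      have : (S:ℝ) * w ≤ S * σ := by nlinarith
      linarith
    · set Iin := Finset.Icc ⌈x0⌉ ⌊x0 + S * σ - w⌋ with hIin
      have hsubI : Iin ⊆ Finset.Icc mlo mhi := by
        intro m hm
        rw [hIin, Finset.mem_Icc] at hm
        rw [Finset.mem_Icc]
        constructor
        · have hfl : ⌊x0 - w⌋ < ⌈x0⌉ := by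
            have h1 : ((⌊x0 - w⌋:ℤ):ℝ) ≤ x0 - w := Int.floor_le _
            have h2 : (x0:ℝ) ≤ ((⌈x0⌉:ℤ):ℝ) := Int.le_ceil _
            have h3 : ((⌊x0 - w⌋:ℤ):ℝ) < ((⌈x0⌉:ℤ):ℝ) := by linarith
            exact_mod_cast h3
          rw [hmlo]; omega
        · rw [hmhi]
          exact le_trans hm.2 (Int.floor_le_floor (by linarith))
      have hwσ1 : 1 ≤ w / σ := by
        rw [le_div_iff₀ hσ]; linarith
      have hper : ∀ m ∈ Iin,
          w / σ - 1 ≤ (((Finset.range S).filter (fun s => cond m s)).card : ℝ) := by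
        intro m hm
        rw [hIin, Finset.mem_Icc] at hm
        have hA0' : (x0:ℝ) ≤ ((⌈x0⌉:ℤ):ℝ) := Int.le_ceil _
        have hA0 : x0 ≤ (m:ℝ) := by
          have : ((⌈x0⌉:ℤ):ℝ) ≤ ((m:ℤ):ℝ) := by exact_mod_cast hm.1
          linarith
        have hBS : (m:ℝ) + w ≤ x0 + S * σ := by
          have h1 : ((⌊x0 + S*σ - w⌋:ℤ):ℝ) ≤ x0 + S*σ - w := Int.floor_le _
          have h2 : ((m:ℤ):ℝ) ≤ ((⌊x0 + S*σ - w⌋:ℤ):ℝ) := by exact_mod_cast hm.2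
          linarith
        set A := ((m:ℝ) - x0) / σ with hA
        set B := ((m:ℝ) - x0 + w) / σ with hB
        have hApos : 0 ≤ A := by
          apply div_nonneg _ hσ.le
          linarith
        have hBpos : 0 ≤ B := by
          apply div_nonneg _ hσ.le
          linarith
        have hBle : B ≤ S := by rw [hB, div_le_iff₀ hσ]; linarith
        have hAB : B - A = w / σ := by rw [hA, hB]; field_simp; ring
        set n1 := ⌈A⌉₊ with hn1
        set n2 := ⌈B⌉₊ with hn2
        have hsubT : Finset.Ico n1 n2 ⊆ (Finset.range S).filter (fun s => cond m s) := by
          intro t htm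
          rw [Finset.mem_Ico] at htm
          have hs1 : A ≤ (t:ℝ) := by
            have h1 : (n1:ℝ) ≤ (t:ℝ) := by exact_mod_cast htm.1
            exact le_trans (Nat.le_ceil A) h1
          have hs2 : (t:ℝ) < B := by
            have h1 : (t:ℝ) + 1 ≤ (n2:ℝ) := by exact_mod_cast htm.2
            have h2 : (n2:ℝ) < B + 1 := Nat.ceil_lt_add_one hBpos
            linarith
          rw [Finset.mem_filter, Finset.mem_range]
          have htS : (t:ℝ) < S := lt_of_lt_of_le hs2 hBle
          refine ⟨by exact_mod_cast htS, ?_, ?_⟩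
          · have : (t:ℝ) * σ < (m:ℝ) - x0 + w := by
              rw [hB] at hs2
              calc (t:ℝ) * σ < (((m:ℝ) - x0 + w) / σ) * σ := by nlinarith
              _ = (m:ℝ) - x0 + w := by field_simp
            linarith
          · have : (m:ℝ) - x0 ≤ t * σ := by
              rw [hA] at hs1
              calc (m:ℝ) - x0 = (((m:ℝ) - x0) / σ) * σ := by field_simp
              _ ≤ t * σ := by nlinarith
            linarith
        have hcardT := Finset.card_le_card hsubT
        rw [Nat.card_Ico] at hcardT
        rcases le_or_gt n2 n1 with hn | hn
        · have h1 : B ≤ (n2:ℝ) := Nat.le_ceil B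
          have h2 : (n1:ℝ) < A + 1 := Nat.ceil_lt_add_one hApos
          have h3 : (n2:ℝ) ≤ n1 := by exact_mod_cast hn
          have h4 : w / σ < 1 := by rw [← hAB]; linarith
          linarith [show (0:ℝ) ≤ (((Finset.range S).filter (fun s => cond m s)).card : ℝ)
            from Nat.cast_nonneg _]
        · have h0 : ((n2 - n1 : ℕ):ℝ) = (n2:ℝ) - n1 := by
            push_cast [Nat.cast_sub hn.le]; ring
          have h1 : B ≤ (n2:ℝ) := Nat.le_ceil B
          have h2 : (n1:ℝ) < A + 1 := Nat.ceil_lt_add_one hApos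
          have h4 : ((n2 - n1:ℕ):ℝ)
              ≤ (((Finset.range S).filter (fun s => cond m s)).card : ℝ) := by
            exact_mod_cast hcardT
          rw [h0] at h4
          have : B - A - 1 ≤ (n2:ℝ) - n1 := by linarith
          rw [hAB] at this
          linarith
      -- assemble the lower bound
      have hcast : (((Finset.range S).filter (fun s : ℕ => Int.fract (x0 + s * σ) < w)).card : ℝ)
          = ∑ m ∈ Finset.Icc mlo mhi,
              (((Finset.range S).filter (fun s => cond m s)).card : ℝ) := by
        rw [step2]; push_cast; ring
      have hsum1 : ∑ m ∈ Iin, (((Finset.range S).filter (fun s => cond m s)).card : ℝ)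
          ≤ ∑ m ∈ Finset.Icc mlo mhi,
              (((Finset.range S).filter (fun s => cond m s)).card : ℝ) := by
        apply Finset.sum_le_sum_of_subset_of_nonneg hsubI
        intro m _ _
        exact Nat.cast_nonneg _
      have hsum2 : (Iin.card : ℝ) * (w / σ - 1)
          ≤ ∑ m ∈ Iin, (((Finset.range S).filter (fun s => cond m s)).card : ℝ) := by
        have := Finset.sum_le_sum hper
        rw [Finset.sum_const, nsmul_eq_mul] at this
        exact this
      have hcardIin : S * σ - 2 ≤ (Iin.card : ℝ) := by
        rw [hIin, Int.card_Icc]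
        rcases le_or_gt (⌊x0 + S * σ - w⌋ + 1 - ⌈x0⌉) 0 with h | h
        · have h0 : (⌊x0 + S * σ - w⌋ + 1 - ⌈x0⌉).toNat = 0 := Int.toNat_of_nonpos h
          rw [h0]
          have h1 : ((⌊x0 + S*σ - w⌋:ℤ):ℝ) + 1 ≤ ((⌈x0⌉:ℤ):ℝ) := by exact_mod_cast (by omega : ⌊x0 + S * σ - w⌋ + 1 ≤ ⌈x0⌉)
          have h2 : x0 + S*σ - w - 1 < ((⌊x0 + S*σ - w⌋:ℤ):ℝ) := by
            have := Int.lt_floor_add_one (x0 + S*σ - w)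
            linarith
          have h3 : ((⌈x0⌉:ℤ):ℝ) < x0 + 1 := Int.ceil_lt_add_one _
          simp only [Nat.cast_zero]
          linarith
        · have h0 : (((⌊x0 + S * σ - w⌋ + 1 - ⌈x0⌉).toNat : ℕ) : ℝ)
              = ((⌊x0 + S * σ - w⌋ + 1 - ⌈x0⌉ : ℤ) : ℝ) := by
            exact_mod_cast Int.toNat_of_nonneg h.le
          rw [h0]
          have h2 : x0 + S*σ - w - 1 < ((⌊x0 + S*σ - w⌋:ℤ):ℝ) := by
            have := Int.lt_floor_add_one (x0 + S*σ - w)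
            linarith
          have h3 : ((⌈x0⌉:ℤ):ℝ) < x0 + 1 := Int.ceil_lt_add_one _
          push_cast
          linarith
      have hfinal : (S * σ - 2) * (w / σ - 1)
          ≤ (Iin.card : ℝ) * (w / σ - 1) := by
        apply mul_le_mul_of_nonneg_right hcardIin
        linarith
      have hexp2 : S * w - (S * σ + 3 / σ + 3) ≤ (S * σ - 2) * (w / σ - 1) := by
        have e1 : (S:ℝ) * σ * (w / σ) = S * w := by field_simp
        have e2 : w / σ ≤ 1 / σ := by gcongr
        have e3 : (0:ℝ) < 1 / σ := by positivity
        have e4 : 3 / σ = 3 * (1 / σ) := by ring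
        have hS0 : (0:ℝ) ≤ S := Nat.cast_nonneg _
        have expand : (S * σ - 2) * (w / σ - 1) = S * σ * (w / σ) - S * σ - 2 * (w / σ) + 2 := by
          ring
        rw [expand, e1, e4]
        linarith
      rw [hcast]
      linarith
  rw [abs_le]
  constructor <;> linarith



set_option maxHeartbeats 1000000 in
lemma line_count_abs {x0 σ w : ℝ} (hσ : σ ≠ 0) (hw0 : 0 < w) (hw1 : w ≤ 1) (S : ℕ) :
    |(((Finset.range S).filter (fun s : ℕ => Int.fract (x0 + s * σ) < w)).card : ℝ) - S * w|
      ≤ S * |σ| + 3 / |σ| + 3 := by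
  rcases lt_or_gt_of_ne hσ with hneg | hpos
  · rcases Nat.eq_zero_or_pos S with rfl | hS
    · have h0 : ((Finset.range 0).filter (fun s : ℕ => Int.fract (x0 + s * σ) < w)).card = 0 := by
        simp
      rw [h0]
      norm_num
      positivity
    · have key : ((Finset.range S).filter (fun s : ℕ => Int.fract (x0 + s * σ) < w)).card
          = ((Finset.range S).filter
              (fun s : ℕ => Int.fract ((x0 + ((S:ℝ) - 1) * σ) + s * (-σ)) < w)).card := by
        rw [Finset.card_filter, Finset.card_filter, ← Finset.sum_range_reflect]
        apply Finset.sum_congr rfl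
        intro s hs
        rw [Finset.mem_range] at hs
        have hcast : ((S - 1 - s : ℕ):ℝ) = (S:ℝ) - 1 - s := by
          have h1 : (1:ℕ) ≤ S := hS
          have h2 : s ≤ S - 1 := by omega
          push_cast [Nat.cast_sub h2, Nat.cast_sub h1]
          ring
        have harg : x0 + ((S - 1 - s : ℕ):ℝ) * σ = (x0 + ((S:ℝ) - 1) * σ) + s * (-σ) := by
          rw [hcast]; ring
        rw [harg]
      rw [key]
      have := line_count (x0 := x0 + ((S:ℝ) - 1) * σ) (σ := -σ) (w := w)
        (by linarith) hw0 hw1 S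
      rwa [abs_of_neg hneg]
  · have := line_count (x0 := x0) (σ := σ) hpos hw0 hw1 S
    rwa [abs_of_pos hpos]

/-- counting function for rotation hits -/
noncomputable def rotCount (γ θ w : ℝ) (N : ℕ) : ℕ :=
  ((Finset.range N).filter (fun t : ℕ => Int.fract (γ + t * θ) < w)).card

lemma rotCount_mono_le {γ θ w : ℝ} {N M : ℕ} (h : N ≤ M) :
    rotCount γ θ w N ≤ rotCount γ θ w M ∧ rotCount γ θ w M ≤ rotCount γ θ w N + (M - N) := by
  unfold rotCount
  constructor
  · apply Finset.card_le_card
    apply Finset.filter_subset_filter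
    intro t ht
    rw [Finset.mem_range] at *
    omega
  · rw [Finset.card_filter, Finset.card_filter]
    rw [Finset.range_eq_Ico, ← Finset.sum_Ico_consecutive _ (Nat.zero_le N) h]
    have h2 : ∑ t ∈ Finset.Ico N M, (if Int.fract (γ + t * θ) < w then 1 else 0) ≤ M - N := by
      calc ∑ t ∈ Finset.Ico N M, (if Int.fract (γ + t * θ) < w then 1 else 0)
          ≤ ∑ _t ∈ Finset.Ico N M, 1 := by
            apply Finset.sum_le_sum
            intro t _
            split <;> omega
      _ = M - N := by rw [Finset.sum_const, Nat.card_Ico, smul_eq_mul, mul_one]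
    have h3 : Finset.Ico 0 N = Finset.range N := by rw [Finset.range_eq_Ico]
    rw [h3]
    omega

lemma sum_range_mul_split (f : ℕ → ℕ) (k S : ℕ) :
    ∑ t ∈ Finset.range (k * S), f t
      = ∑ i ∈ Finset.range k, ∑ s ∈ Finset.range S, f (i + s * k) := by
  induction S with
  | zero => simp
  | succ S ih =>
      have h1 : k * (S + 1) = k * S + k := by ring
      rw [h1, Finset.range_eq_Ico, ← Finset.sum_Ico_consecutive _ (Nat.zero_le (k * S)) (by omega),
        ← Finset.range_eq_Ico, ih]
      have h2 : ∑ t ∈ Finset.Ico (k * S) (k * S + k), f t = ∑ i ∈ Finset.range k, f (i + S * k) := by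
        rw [Finset.sum_Ico_eq_sum_range]
        simp only [Nat.add_sub_cancel_left]
        apply Finset.sum_congr rfl
        intro i _
        congr 1
        ring
      rw [h2]
      rw [← Finset.sum_add_distrib]
      apply Finset.sum_congr rfl
      intro i _
      rw [Finset.sum_range_succ]

set_option maxHeartbeats 1000000 in
/-- equidistribution of irrational rotations, в counting form -/
lemma rot_est (θ γ w : ℝ) (hθ : ∀ n : ℕ, 1 ≤ n → ∀ z : ℤ, (n : ℝ) * θ ≠ (z:ℝ))
    (hw0 : 0 < w) (hw1 : w ≤ 1) {ε : ℝ} (hε : 0 < ε) :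
    ∃ N0 : ℕ, ∀ N, N0 ≤ N → |(rotCount γ θ w N : ℝ) - N * w| ≤ ε * N := by
  -- choose a good rational approximation
  have hn0 : 0 < max 1 ⌈4 / ε⌉₊ := by positivity
  obtain ⟨j, k, hk0, hkn, hjk⟩ := Real.exists_int_int_abs_mul_sub_le θ hn0
  set n₀ := max 1 ⌈4 / ε⌉₊ with hn₀
  set σ := (k : ℝ) * θ - j with hσdef
  set K := k.toNat with hK
  have hK1 : 1 ≤ K := by omega
  have hKk : (K : ℝ) = (k : ℝ) := by
    rw [hK]; exact_mod_cast Int.toNat_of_nonneg hk0.le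
  have hσne : σ ≠ 0 := by
    intro hcon
    have : (K : ℝ) * θ = (j : ℝ) := by
      rw [hKk]
      have : (k:ℝ) * θ - j = 0 := hcon
      linarith
    exact hθ K hK1 j this
  have hσsmall : |σ| ≤ 1 / (n₀ + 1) := hjk
  have hσeps : |σ| < ε / 4 := by
    have h1 : (4 / ε : ℝ) ≤ n₀ := by
      rw [hn₀]
      calc (4 / ε : ℝ) ≤ ⌈4 / ε⌉₊ := Nat.le_ceil _
      _ ≤ (max 1 ⌈4 / ε⌉₊ : ℕ) := by exact_mod_cast Nat.le_max_right _ _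
    have h2 : (0:ℝ) < n₀ + 1 := by positivity
    have h3 : 1 / ((n₀:ℝ) + 1) < 1 / (4 / ε) := by
      apply div_lt_div_of_pos_left one_pos (by positivity)
      linarith
    have h4 : (1:ℝ) / (4 / ε) = ε / 4 := by
      field_simp
    linarith
  have hσabs : 0 < |σ| := abs_pos.mpr hσne
  -- per N of the form K * S
  have hKS : ∀ S : ℕ, |(rotCount γ θ w (K * S) : ℝ) - (K:ℝ) * S * w|
      ≤ (K:ℝ) * S * |σ| + (K:ℝ) * (3 / |σ| + 3) := by
    intro S
    have hsplit : rotCount γ θ w (K * S)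
        = ∑ i ∈ Finset.range K,
            ((Finset.range S).filter
              (fun s : ℕ => Int.fract ((γ + i * θ) + s * σ) < w)).card := by
      unfold rotCount
      rw [Finset.card_filter, sum_range_mul_split]
      apply Finset.sum_congr rfl
      intro i _
      rw [Finset.card_filter]
      apply Finset.sum_congr rfl
      intro s _
      congr 1
      have harg : γ + (i + s * K : ℕ) * θ = ((γ + i * θ) + s * σ) + (s * j : ℤ) := by
        push_cast
        rw [hσdef, hKk]
        ring
      rw [harg, Int.fract_add_intCast]
    rw [hsplit]
    have hterm : ∀ i ∈ Finset.range K,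
        |((((Finset.range S).filter
            (fun s : ℕ => Int.fract ((γ + i * θ) + s * σ) < w)).card : ℝ)) - S * w|
          ≤ S * |σ| + 3 / |σ| + 3 := by
      intro i _
      exact line_count_abs hσne hw0 hw1 S
    have hcast : ((∑ i ∈ Finset.range K,
        ((Finset.range S).filter
          (fun s : ℕ => Int.fract ((γ + i * θ) + s * σ) < w)).card : ℕ) : ℝ)
        = ∑ i ∈ Finset.range K,
            ((((Finset.range S).filter
              (fun s : ℕ => Int.fract ((γ + i * θ) + s * σ) < w)).card : ℝ)) := by
      push_cast; ring
    rw [hcast]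
    have habs : |∑ i ∈ Finset.range K,
        (((((Finset.range S).filter
          (fun s : ℕ => Int.fract ((γ + i * θ) + s * σ) < w)).card : ℝ)) - S * w)|
        ≤ ∑ i ∈ Finset.range K, (S * |σ| + 3 / |σ| + 3) := by
      calc _ ≤ ∑ i ∈ Finset.range K, |(((((Finset.range S).filter
          (fun s : ℕ => Int.fract ((γ + i * θ) + s * σ) < w)).card : ℝ)) - S * w)| :=
            Finset.abs_sum_le_sum_abs _ _
      _ ≤ _ := Finset.sum_le_sum hterm
    rw [Finset.sum_sub_distrib, Finset.sum_const, Finset.card_range, nsmul_eq_mul] at habs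
    rw [Finset.sum_const, Finset.card_range, nsmul_eq_mul] at habs
    have heq : (K : ℝ) * S * w = (K:ℝ) * (S * w) := by ring
    rw [heq]
    calc |(∑ i ∈ Finset.range K, ((((Finset.range S).filter
          (fun s : ℕ => Int.fract ((γ + i * θ) + s * σ) < w)).card : ℝ))) - (K:ℝ) * (S * w)|
        ≤ (K:ℝ) * (S * |σ| + 3 / |σ| + 3) := habs
    _ = (K:ℝ) * S * |σ| + (K:ℝ) * (3 / |σ| + 3) := by ring
  -- general N
  set E := (K : ℝ) * (3 / |σ| + 3) + 2 * K with hE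
  have hEpos : 0 < E := by
    rw [hE]
    have : (0:ℝ) < K := by exact_mod_cast hK1
    positivity
  refine ⟨max 1 ⌈E / (ε / 2)⌉₊, fun N hN => ?_⟩
  have hN1 : 1 ≤ N := le_trans (Nat.le_max_left _ _) hN
  set S := N / K with hS
  have hKS_le : K * S ≤ N := Nat.mul_div_le N K
  have hN_lt : N < K * S + K := by
    have h := Nat.div_add_mod N K
    have h2 : N % K < K := Nat.mod_lt _ (by omega)
    rw [hS]
    omega
  obtain ⟨hm1, hm2⟩ := rotCount_mono_le (γ := γ) (θ := θ) (w := w) hKS_le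
  have hdiff : (rotCount γ θ w N : ℝ) - (rotCount γ θ w (K * S) : ℝ) ≤ K := by
    have h2 : rotCount γ θ w N ≤ rotCount γ θ w (K * S) + (N - K * S) := hm2
    have h3 : N - K * S ≤ K := by omega
    have h5 : rotCount γ θ w N ≤ rotCount γ θ w (K * S) + K := by omega
    have h4 : (rotCount γ θ w N : ℝ) ≤ (rotCount γ θ w (K * S) : ℝ) + K := by exact_mod_cast h5
    linarith
  have hdiff2 : (0:ℝ) ≤ (rotCount γ θ w N : ℝ) - (rotCount γ θ w (K * S) : ℝ) := by
    have : rotCount γ θ w (K * S) ≤ rotCount γ θ w N := hm1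
    have h4 : ((rotCount γ θ w (K * S)):ℝ) ≤ rotCount γ θ w N := by exact_mod_cast this
    linarith
  have hNKS : ((N : ℝ) - (K * S : ℕ)) ≤ K := by
    have : N - K * S ≤ K := by omega
    have h5 : ((N - K * S : ℕ) : ℝ) = (N:ℝ) - ((K * S : ℕ):ℝ) := by
      push_cast [Nat.cast_sub hKS_le]; ring
    calc (N : ℝ) - ((K * S : ℕ):ℝ) = ((N - K * S : ℕ) : ℝ) := h5.symm
    _ ≤ K := by exact_mod_cast this
  have hNKS0 : (0:ℝ) ≤ (N : ℝ) - ((K * S : ℕ):ℝ) := by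
    have : ((K * S : ℕ):ℝ) ≤ N := by exact_mod_cast hKS_le
    linarith
  have hmain := hKS S
  have htri : |(rotCount γ θ w N : ℝ) - N * w|
      ≤ |(rotCount γ θ w (K * S) : ℝ) - ((K * S : ℕ):ℝ) * w| + K + K * w := by
    have e1 : (rotCount γ θ w N : ℝ) - N * w
        = ((rotCount γ θ w (K * S) : ℝ) - ((K * S : ℕ):ℝ) * w)
          + ((rotCount γ θ w N : ℝ) - rotCount γ θ w (K * S))
          - ((N:ℝ) - ((K * S : ℕ):ℝ)) * w := by ring
    rw [e1]
    have b1 : |((rotCount γ θ w N : ℝ) - rotCount γ θ w (K * S))| ≤ K := by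
      rw [abs_of_nonneg hdiff2]; exact hdiff
    have b2 : |((N:ℝ) - ((K * S : ℕ):ℝ)) * w| ≤ K * w := by
      rw [abs_of_nonneg (by positivity)]
      apply mul_le_mul_of_nonneg_right hNKS hw0.le
    calc _ ≤ |((rotCount γ θ w (K * S) : ℝ) - ((K * S : ℕ):ℝ) * w)
          + ((rotCount γ θ w N : ℝ) - rotCount γ θ w (K * S))|
          + |((N:ℝ) - ((K * S : ℕ):ℝ)) * w| := abs_sub _ _
    _ ≤ |(rotCount γ θ w (K * S) : ℝ) - ((K * S : ℕ):ℝ) * w|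
          + |((rotCount γ θ w N : ℝ) - rotCount γ θ w (K * S))|
          + |((N:ℝ) - ((K * S : ℕ):ℝ)) * w| := by
        have := abs_add_le ((rotCount γ θ w (K * S) : ℝ) - ((K * S : ℕ):ℝ) * w)
          ((rotCount γ θ w N : ℝ) - rotCount γ θ w (K * S))
        linarith
    _ ≤ _ := by linarith
  have hcastKS : ((K * S : ℕ):ℝ) = (K:ℝ) * S := by push_cast; ring
  have hfin : |(rotCount γ θ w N : ℝ) - N * w|
      ≤ (K:ℝ) * S * |σ| + E := by
    rw [hE]
    rw [hcastKS] at htri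
    have hw' : (K:ℝ) * w ≤ K := by
      have : (0:ℝ) ≤ K := by positivity
      nlinarith
    calc |(rotCount γ θ w N : ℝ) - N * w|
        ≤ |(rotCount γ θ w (K * S) : ℝ) - (K:ℝ) * S * w| + K + K * w := htri
    _ ≤ ((K:ℝ) * S * |σ| + (K:ℝ) * (3 / |σ| + 3)) + K + K * w := by linarith
    _ ≤ _ := by linarith
  have hKSN : (K:ℝ) * S ≤ N := by
    rw [← hcastKS]; exact_mod_cast hKS_le
  have hENB : E ≤ (ε / 2) * N := by
    have h1 : (E / (ε / 2) : ℝ) ≤ ⌈E / (ε / 2)⌉₊ := Nat.le_ceil _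
    have h2 : ((max 1 ⌈E / (ε / 2)⌉₊ : ℕ) : ℝ) ≤ N := by exact_mod_cast hN
    have h3 : ((⌈E / (ε / 2)⌉₊ : ℕ) : ℝ) ≤ ((max 1 ⌈E / (ε / 2)⌉₊ : ℕ) : ℝ) := by
      exact_mod_cast Nat.le_max_right _ _
    have h4 : (E / (ε / 2) : ℝ) ≤ N := by linarith
    have h5 : (0:ℝ) < ε / 2 := by positivity
    rw [div_le_iff₀ h5] at h4
    linarith
  have hNnn : (0:ℝ) ≤ N := Nat.cast_nonneg _
  calc |(rotCount γ θ w N : ℝ) - N * w| ≤ (K:ℝ) * S * |σ| + E := hfin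
  _ ≤ (N:ℝ) * (ε / 4) + (ε / 2) * N := by
      have : (K:ℝ) * S * |σ| ≤ (N:ℝ) * (ε/4) := by
        have h1 : (K:ℝ) * S * |σ| ≤ (N:ℝ) * |σ| := by
          apply mul_le_mul_of_nonneg_right hKSN hσabs.le
        have h2 : (N:ℝ) * |σ| ≤ (N:ℝ) * (ε/4) := by
          apply mul_le_mul_of_nonneg_left hσeps.le hNnn
        linarith
      linarith
  _ ≤ ε * N := by nlinarith





section SetCnt

variable {α : Type*} [DecidableEq α]

/-- count of positions in window whose letter lies in the set `S` -/
def scnt (v : ℕ → α) (S : Finset α) (p n : ℕ) : ℕ :=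
  ((Finset.range n).filter (fun i => v (p + i) ∈ S)).card

lemma scnt_zero (v : ℕ → α) (S : Finset α) (p : ℕ) : scnt v S p 0 = 0 := by simp [scnt]

lemma scnt_succ (v : ℕ → α) (S : Finset α) (p n : ℕ) :
    scnt v S p (n + 1) = scnt v S p n + (if v (p + n) ∈ S then 1 else 0) := by
  unfold scnt
  rw [Finset.range_add_one, Finset.filter_insert]
  by_cases h : v (p + n) ∈ S
  · simp [h, Finset.card_insert_of_notMem, Finset.mem_filter]
  · simp [h]

lemma scnt_step (v : ℕ → α) (S : Finset α) (p L : ℕ) :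
    scnt v S p L + (if v (p + L) ∈ S then 1 else 0)
      = (if v p ∈ S then 1 else 0) + scnt v S (p + 1) L := by
  induction L with
  | zero => simp [scnt_zero]
  | succ L ih =>
      rw [scnt_succ, scnt_succ]
      have h1 : p + 1 + L = p + (L + 1) := by ring
      rw [h1]
      omega

end SetCnt



lemma rot_tendsto (θ γ w : ℝ) (hθ : ∀ n : ℕ, 1 ≤ n → ∀ z : ℤ, (n : ℝ) * θ ≠ (z:ℝ))
    (hw0 : 0 < w) (hw1 : w ≤ 1) :
    Tendsto (fun N : ℕ => (rotCount γ θ w N : ℝ) / N) atTop (nhds w) := by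
  rw [Metric.tendsto_atTop]
  intro ε hε
  obtain ⟨N0, hN0⟩ := rot_est θ γ w hθ hw0 hw1 (show (0:ℝ) < ε/2 by linarith)
  refine ⟨max N0 1, fun N hN => ?_⟩
  have hN1 : 1 ≤ N := le_trans (Nat.le_max_right _ _) hN
  have hNpos : (0:ℝ) < N := by exact_mod_cast hN1
  have hb := hN0 N (le_trans (Nat.le_max_left _ _) hN)
  rw [Real.dist_eq]
  have heq : (rotCount γ θ w N : ℝ) / N - w = ((rotCount γ θ w N : ℝ) - N * w) / N := by
    field_simp
  rw [heq, abs_div, abs_of_pos hNpos]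
  rw [div_lt_iff₀ hNpos]
  calc |(rotCount γ θ w N : ℝ) - N * w| ≤ (ε/2) * N := hb
  _ < ε * N := by nlinarith

lemma card_filter_near {s : Finset ℕ} {P P' : ℕ → Prop} [DecidablePred P] [DecidablePred P']
    (t0 t1 : ℕ) (h : ∀ x ∈ s, x ≠ t0 → x ≠ t1 → (P x ↔ P' x)) :
    (s.filter P).card ≤ (s.filter P').card + 2 := by
  have hsub : s.filter P ⊆ (s.filter P') ∪ {t0, t1} := by
    intro x hx
    rw [Finset.mem_filter] at hx
    rw [Finset.mem_union]
    by_cases h0 : x = t0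
    · right; simp [h0]
    · by_cases h1 : x = t1
      · right; simp [h1]
      · left
        rw [Finset.mem_filter]
        exact ⟨hx.1, (h x hx.1 h0 h1).mp hx.2⟩
  calc (s.filter P).card ≤ ((s.filter P') ∪ {t0, t1}).card := Finset.card_le_card hsub
  _ ≤ (s.filter P').card + ({t0, t1} : Finset ℕ).card := Finset.card_union_le _ _
  _ ≤ (s.filter P').card + 2 := by
      have : ({t0, t1} : Finset ℕ).card ≤ 2 := Finset.card_insert_le _ _ |>.trans (by simp)
      omega

lemma cnt_sum_swap {α : Type*} [DecidableEq α] (v : ℕ → α) (S : Finset α) (p L : ℕ) :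
    (∑ e ∈ S, cnt v e p L) = scnt v S p L := by
  unfold cnt scnt
  rw [Finset.card_filter]
  have h1 : ∀ e ∈ S, ((Finset.range L).filter (fun i => v (p + i) = e)).card
      = ∑ i ∈ Finset.range L, (if v (p + i) = e then 1 else 0) := by
    intro e _
    rw [Finset.card_filter]
  rw [Finset.sum_congr rfl h1, Finset.sum_comm]
  apply Finset.sum_congr rfl
  intro i _
  rw [Finset.sum_ite_eq S (v (p + i)) (fun _ => 1)]

/-- THE CORE: a balanced sequence cannot have both a rigid letter occurring unboundedly
and a non-rigid letter. -/
lemma nonrigid_core [Fintype α] {v : ℕ → α} (hbal : Balanced v)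
    {a c : α} (hra : Rigid v a) (hua : ∀ N, ∃ i, N ≤ i ∧ v i = a)
    (hnc : ¬ Rigid v c) : False := by
  classical
  have hchoice : ∀ e : α, ∃ LP : ℕ × ℕ, 0 < LP.1 ∧ ∀ p, LP.2 ≤ p →
      (Rigid v e → (v (p + LP.1) = e ↔ v p = e)) := by
    intro e
    by_cases he : Rigid v e
    · obtain ⟨L, hL, P, hP⟩ := he
      exact ⟨(L, P), hL, fun p hp _ => hP p hp⟩
    · exact ⟨(1, 0), Nat.one_pos, fun p hp hcon => absurd hcon he⟩
  choose LP hLP1 hLP2 using hchoice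
  set Q := ∏ e ∈ (Finset.univ : Finset α), (LP e).1 with hQdef
  have hQpos : 0 < Q := Finset.prod_pos fun e _ => hLP1 e
  set P1 := Finset.univ.sup (fun e : α => (LP e).2) with hP1def
  have hiter0 : ∀ e : α, Rigid v e → ∀ m p, (LP e).2 ≤ p →
      (v (p + m * (LP e).1) = e ↔ v p = e) := by
    intro e he m
    induction m with
    | zero => intro p _; simp
    | succ m ih =>
        intro p hp
        have h1 : v (p + m * (LP e).1 + (LP e).1) = e ↔ v (p + m * (LP e).1) = e :=
          hLP2 e (p + m * (LP e).1) (by omega) he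
        have h2 := ih p hp
        have harg : p + (m + 1) * (LP e).1 = p + m * (LP e).1 + (LP e).1 := by ring
        rw [harg]
        exact h1.trans h2
  have hiter : ∀ e : α, Rigid v e → ∀ p, P1 ≤ p → (v (p + Q) = e ↔ v p = e) := by
    intro e he p hp
    have hdvd : (LP e).1 ∣ Q := Finset.dvd_prod_of_mem _ (Finset.mem_univ e)
    have hPe : (LP e).2 ≤ p :=
      le_trans (Finset.le_sup (f := fun e : α => (LP e).2) (Finset.mem_univ e)) hp
    have := hiter0 e he (Q / (LP e).1) p hPe
    rwa [Nat.div_mul_cancel hdvd] at this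
  set NR := Finset.univ.filter (fun e : α => ¬ Rigid v e) with hNRdef
  have hmemNR : ∀ x : α, x ∈ NR ↔ ¬ Rigid v x := by
    intro x; rw [hNRdef]; simp
  have hcNR : c ∈ NR := (hmemNR c).mpr hnc
  have haNR : a ∉ NR := by rw [hmemNR]; simpa using hra
  have hSper : ∀ p, P1 ≤ p → ((v (p + Q) ∈ NR) ↔ (v p ∈ NR)) := by
    intro p hp
    rw [hmemNR, hmemNR]
    constructor
    · intro hnp hr
      have h1 := (hiter (v p) hr p hp).mpr rfl
      rw [h1] at hnp
      exact hnp hr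
    · intro hnp hr
      have h1 := (hiter (v (p + Q)) hr p hp).mp rfl
      rw [h1] at hnp
      exact hnp hr
  have hscnt_inv : ∀ p L, P1 ≤ p → scnt v NR (p + Q) L = scnt v NR p L := by
    intro p L hp
    unfold scnt
    congr 1
    apply Finset.filter_congr
    intro i _
    have h1 : p + Q + i = (p + i) + Q := by ring
    rw [h1]
    exact hSper (p + i) (by omega)
  obtain ⟨phat, hphat1, hphat2⟩ := hua P1
  obtain ⟨p', hp'1, hp'2⟩ := nonrigid_unbounded hnc (phat + 1)
  set L := p' - phat with hLdef
  have hL1 : 1 ≤ L := by omega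
  have hphatNR : v phat ∉ NR := by rw [hphat2]; exact haNR
  have hp'NR : v p' ∈ NR := by rw [hp'2]; exact hcNR
  have hpL : phat + L = p' := by omega
  have hH : scnt v NR (phat + 1) L = scnt v NR phat L + 1 := by
    have hstep := scnt_step v NR phat L
    rw [hpL] at hstep
    rw [if_pos hp'NR, if_neg hphatNR] at hstep
    omega
  have hconst : ∀ b, P1 ≤ b → ∀ t, scnt v NR (b + t * Q) L = scnt v NR b L := by
    intro b hb t
    induction t with
    | zero => simp
    | succ t ih =>
        have harg : b + (t + 1) * Q = (b + t * Q) + Q := by ring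
        rw [harg, hscnt_inv (b + t * Q) L (by omega), ih]
  have hNRe : ∀ e ∈ NR, ¬ Rigid v e := fun e he => (hmemNR e).mp he
  have hwb : ∀ e ∈ NR, 0 < (L:ℝ) * rho v e - (cmin v e L : ℝ)
      ∧ (L:ℝ) * rho v e - (cmin v e L:ℝ) ≤ 1 := by
    intro e he
    obtain ⟨h1, h2⟩ := rho_strict hbal (hNRe e he) L hL1
    constructor <;> linarith
  -- key per-letter limit
  have hkey : ∀ e ∈ NR, ∀ b : ℕ, Tendsto (fun N : ℕ =>
      (((Finset.range N).filter
        (fun t : ℕ => cnt v e (b + t * Q) L = cmin v e L + 1)).card : ℝ) / N)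
      atTop (nhds ((L:ℝ) * rho v e - (cmin v e L : ℝ))) := by
    intro e he b
    set w := (L:ℝ) * rho v e - (cmin v e L : ℝ) with hwdef
    set θ := -(Q:ℝ) * rho v e with hθdef
    set γ := -(b:ℝ) * rho v e - beta v e with hγdef
    have hne := hNRe e he
    have hθirr : ∀ n : ℕ, 1 ≤ n → ∀ z : ℤ, (n : ℝ) * θ ≠ (z:ℝ) := by
      intro n hn z hcon
      apply rho_not_int hbal hne (n * Q) (by exact Nat.mul_pos hn hQpos) (-z)
      rw [hθdef] at hcon
      push_cast at hcon ⊢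
      linarith
    have hFeq : ∀ t : ℕ, Ffr v e (b + t * Q) = Int.fract (γ + t * θ) := by
      intro t
      unfold Ffr
      congr 1
      rw [hγdef, hθdef]
      push_cast
      ring
    have hrot := rot_tendsto θ γ w hθirr (hwb e he).1 (hwb e he).2
    set T0 : ℕ := if h : ∃ t : ℕ, Ffr v e (b + t * Q) = 0 then h.choose else 0 with hT0
    have hT0p : ∀ t : ℕ, t ≠ T0 → Ffr v e (b + t * Q) ≠ 0 := by
      intro t ht hcon
      have hex : ∃ t : ℕ, Ffr v e (b + t * Q) = 0 := ⟨t, hcon⟩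
      rw [hT0, dif_pos hex] at ht
      have h2 := hex.choose_spec
      have h3 : Ffr v e (b + t * Q) = Ffr v e (b + hex.choose * Q) := by rw [hcon, h2]
      have h4 := F_inj hbal hne h3
      have h5 : t * Q = hex.choose * Q := by omega
      exact ht (Nat.eq_of_mul_eq_mul_right hQpos h5)
    set T1 : ℕ := if h : ∃ t : ℕ, Ffr v e (b + t * Q) = w then h.choose else 0 with hT1
    have hT1p : ∀ t : ℕ, t ≠ T1 → Ffr v e (b + t * Q) ≠ w := by
      intro t ht hcon
      have hex : ∃ t : ℕ, Ffr v e (b + t * Q) = w := ⟨t, hcon⟩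
      rw [hT1, dif_pos hex] at ht
      have h2 := hex.choose_spec
      have h3 : Ffr v e (b + t * Q) = Ffr v e (b + hex.choose * Q) := by rw [hcon, h2]
      have h4 := F_inj hbal hne h3
      have h5 : t * Q = hex.choose * Q := by omega
      exact ht (Nat.eq_of_mul_eq_mul_right hQpos h5)
    have hequiv : ∀ t : ℕ, t ≠ T0 → t ≠ T1 →
        ((cnt v e (b + t * Q) L = cmin v e L + 1) ↔ (Int.fract (γ + t * θ) < w)) := by
      intro t h0 h1
      rw [← hFeq t]
      exact indicator_exc hbal hne hL1 (b + t * Q) (hT0p t h0) (hT1p t h1)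
    have hcomp : ∀ N : ℕ,
        |((((Finset.range N).filter
            (fun t : ℕ => cnt v e (b + t * Q) L = cmin v e L + 1)).card : ℝ))
          - (rotCount γ θ w N : ℝ)| ≤ 2 := by
      intro N
      have h1 := card_filter_near (s := Finset.range N)
        (P := fun t : ℕ => cnt v e (b + t * Q) L = cmin v e L + 1)
        (P' := fun t : ℕ => Int.fract (γ + t * θ) < w) T0 T1
        (fun x _ h0 h1 => hequiv x h0 h1)
      have h2 := card_filter_near (s := Finset.range N)
        (P := fun t : ℕ => Int.fract (γ + t * θ) < w)
        (P' := fun t : ℕ => cnt v e (b + t * Q) L = cmin v e L + 1) T0 T1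
        (fun x _ h0 h1 => (hequiv x h0 h1).symm)
      unfold rotCount
      rw [abs_le]
      constructor
      · have := h2
        push_cast
        have h2' : ((Finset.filter (fun t : ℕ => Int.fract (γ + ↑t * θ) < w)
            (Finset.range N)).card : ℝ)
            ≤ ((Finset.filter (fun t : ℕ => cnt v e (b + t * Q) L = cmin v e L + 1)
              (Finset.range N)).card : ℝ) + 2 := by exact_mod_cast h2
        linarith
      · have h1' : ((Finset.filter (fun t : ℕ => cnt v e (b + t * Q) L = cmin v e L + 1)
            (Finset.range N)).card : ℝ)
            ≤ ((Finset.filter (fun t : ℕ => Int.fract (γ + ↑t * θ) < w)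
              (Finset.range N)).card : ℝ) + 2 := by exact_mod_cast h1
        linarith
    have hdiffz : Tendsto (fun N : ℕ =>
        ((((Finset.range N).filter
          (fun t : ℕ => cnt v e (b + t * Q) L = cmin v e L + 1)).card : ℝ)) / N
          - (rotCount γ θ w N : ℝ) / N) atTop (nhds 0) := by
      refine squeeze_zero_norm (fun N => ?_) (tendsto_const_div_atTop_nhds_zero_nat 2)
      · rcases Nat.eq_zero_or_pos N with rfl | hN
        · simp
        · have hNpos : (0:ℝ) < N := by exact_mod_cast hN
          have e1 : ((((Finset.range N).filter
              (fun t : ℕ => cnt v e (b + t * Q) L = cmin v e L + 1)).card : ℝ)) / N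
              - (rotCount γ θ w N : ℝ) / N
              = (((((Finset.range N).filter
                (fun t : ℕ => cnt v e (b + t * Q) L = cmin v e L + 1)).card : ℝ))
                - (rotCount γ θ w N : ℝ)) / N := by
            field_simp
          rw [Real.norm_eq_abs, e1, abs_div, abs_of_pos hNpos]
          gcongr
          exact hcomp N
    have hfun : (fun N : ℕ =>
        ((((Finset.range N).filter
          (fun t : ℕ => cnt v e (b + t * Q) L = cmin v e L + 1)).card : ℝ)) / N)
        = fun N : ℕ =>
          (((((Finset.range N).filter
            (fun t : ℕ => cnt v e (b + t * Q) L = cmin v e L + 1)).card : ℝ)) / N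
            - (rotCount γ θ w N : ℝ) / N) + (rotCount γ θ w N : ℝ) / N := by
      funext N; ring
    rw [hwdef] at hrot ⊢
    rw [hfun]
    have := Tendsto.add hdiffz hrot
    simpa [hwdef] using this
  -- assemble: eventually-constant averages
  have hdecomp : ∀ p : ℕ, ∀ e ∈ NR, cnt v e p L
      = cmin v e L + (if cnt v e p L = cmin v e L + 1 then 1 else 0) := by
    intro p e _
    rcases cnt_two_val hbal e L p with h | h
    · rw [h, if_neg (by omega)]
      omega
    · rw [h, if_pos rfl]
  have hsum_ind : ∀ b, P1 ≤ b → ∀ t : ℕ,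
      (∑ e ∈ NR, cmin v e L)
        + (∑ e ∈ NR, (if cnt v e (b + t * Q) L = cmin v e L + 1 then 1 else 0))
      = scnt v NR b L := by
    intro b hb t
    have h1 : ∑ e ∈ NR, cnt v e (b + t * Q) L = scnt v NR (b + t * Q) L :=
      cnt_sum_swap v NR (b + t * Q) L
    rw [hconst b hb t] at h1
    have h2 : ∑ e ∈ NR, cnt v e (b + t * Q) L
        = ∑ e ∈ NR, (cmin v e L + (if cnt v e (b + t * Q) L = cmin v e L + 1 then 1 else 0)) :=
      Finset.sum_congr rfl (fun e he => hdecomp (b + t * Q) e he)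
    rw [Finset.sum_add_distrib] at h2
    omega
  have hglue : ∀ b, P1 ≤ b →
      ((scnt v NR b L - ∑ e ∈ NR, cmin v e L : ℕ) : ℝ)
        = ∑ e ∈ NR, ((L:ℝ) * rho v e - (cmin v e L : ℝ)) := by
    intro b hb
    set HB : ℕ := scnt v NR b L - ∑ e ∈ NR, cmin v e L with hHB
    have h1 : Tendsto (fun N : ℕ => ∑ e ∈ NR,
        ((((Finset.range N).filter
          (fun t : ℕ => cnt v e (b + t * Q) L = cmin v e L + 1)).card : ℝ) / N)) atTop
        (nhds (∑ e ∈ NR, ((L:ℝ) * rho v e - (cmin v e L : ℝ)))) :=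
      tendsto_finset_sum _ (fun e he => hkey e he b)
    have h2 : ∀ N : ℕ, 1 ≤ N → (∑ e ∈ NR,
        ((((Finset.range N).filter
          (fun t : ℕ => cnt v e (b + t * Q) L = cmin v e L + 1)).card : ℝ) / N)) = (HB : ℝ) := by
      intro N hN
      have hNpos : (0:ℝ) < N := by exact_mod_cast hN
      have hc : ∀ e ∈ NR, (((Finset.range N).filter
          (fun t : ℕ => cnt v e (b + t * Q) L = cmin v e L + 1)).card : ℕ)
          = ∑ t ∈ Finset.range N, (if cnt v e (b + t * Q) L = cmin v e L + 1 then 1 else 0) := by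
        intro e _
        rw [Finset.card_filter]
      have hswap : (∑ e ∈ NR, ((Finset.range N).filter
          (fun t : ℕ => cnt v e (b + t * Q) L = cmin v e L + 1)).card)
          = ∑ t ∈ Finset.range N, ∑ e ∈ NR,
              (if cnt v e (b + t * Q) L = cmin v e L + 1 then 1 else 0) := by
        rw [Finset.sum_congr rfl hc, Finset.sum_comm]
      have hper : ∀ t ∈ Finset.range N,
          (∑ e ∈ NR, (if cnt v e (b + t * Q) L = cmin v e L + 1 then 1 else 0)) = HB := by
        intro t _
        have := hsum_ind b hb t
        rw [hHB]
        omega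
      have htot : (∑ e ∈ NR, ((Finset.range N).filter
          (fun t : ℕ => cnt v e (b + t * Q) L = cmin v e L + 1)).card) = N * HB := by
        rw [hswap, Finset.sum_congr rfl hper, Finset.sum_const, Finset.card_range, smul_eq_mul]
      have hcast : (∑ e ∈ NR, ((((Finset.range N).filter
          (fun t : ℕ => cnt v e (b + t * Q) L = cmin v e L + 1)).card : ℝ) / N))
          = ((∑ e ∈ NR, (((Finset.range N).filter
            (fun t : ℕ => cnt v e (b + t * Q) L = cmin v e L + 1)).card : ℕ) : ℕ) : ℝ) / N := by
        rw [← Finset.sum_div]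
        congr 1
        push_cast
        ring
      rw [hcast, htot]
      push_cast
      field_simp
    have h3 : Tendsto (fun N : ℕ => ∑ e ∈ NR,
        ((((Finset.range N).filter
          (fun t : ℕ => cnt v e (b + t * Q) L = cmin v e L + 1)).card : ℝ) / N)) atTop
        (nhds (HB : ℝ)) := by
      apply Tendsto.congr' _ tendsto_const_nhds
      filter_upwards [Filter.eventually_ge_atTop 1] with N hN
      exact (h2 N hN).symm
    exact tendsto_nhds_unique h3 h1
  have e1 := hglue phat hphat1
  have e2 := hglue (phat + 1) (by omega)
  rw [hH] at e2
  have hle : (∑ e ∈ NR, cmin v e L) ≤ scnt v NR phat L := by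
    have := hsum_ind phat hphat1 0
    omega
  have hnat : scnt v NR phat L + 1 - ∑ e ∈ NR, cmin v e L
      = (scnt v NR phat L - ∑ e ∈ NR, cmin v e L) + 1 := by omega
  rw [hnat] at e2
  push_cast at e2
  rw [← e1] at e2
  linarith

lemma const_gap_ep [Fintype α] {v : ℕ → α} (hbal : Balanced v) (hrec : Recurrent v)
    (a : α) (ha : ∃ i, v i = a) {k : ℕ} (hk : 0 < k)
    (hgap : ∀ i j, ConsecOcc v a i j → j - i = k) : EventuallyPeriodic v := by
  obtain ⟨i0, hi0⟩ := ha
  have hra : Rigid v a := rigid_of_const_gap hrec hi0 hk hgap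
  by_cases hall : ∀ c, Rigid v c
  · exact ep_of_all_rigid hall
  · push_neg at hall
    obtain ⟨c, hc⟩ := hall
    exact absurd (nonrigid_core hbal hra (occ_unbounded hrec a ⟨i0, hi0⟩) hc) not_false

end Part2


theorem statement0 {α : Type*} [Fintype α] [DecidableEq α] (v : ℕ → α)
    (hrec : Recurrent v) (hap : ¬ EventuallyPeriodic v) (hbal : Balanced v)
    (a : α) (ha : ∃ i, v i = a) :
    ∃ k : ℕ, 0 < k ∧
      {m : ℕ | ∃ i j : ℕ, ConsecOcc v a i j ∧ m = j - i} = {k, k + 1} := by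
  classical
  have hne : ({m : ℕ | ∃ i j : ℕ, ConsecOcc v a i j ∧ m = j - i}).Nonempty := by
    obtain ⟨i, hi⟩ := ha
    obtain ⟨j, hj⟩ := exists_consec hrec a hi
    exact ⟨j - i, i, j, hj, rfl⟩
  set G := {m : ℕ | ∃ i j : ℕ, ConsecOcc v a i j ∧ m = j - i} with hG
  set k := sInf G with hkdef
  have hkmem : k ∈ G := Nat.sInf_mem hne
  have hkpos : 0 < k := by
    obtain ⟨i, j, hc, hme⟩ := hkmem
    have := hc.1; omega
  have hsub : ∀ m ∈ G, m = k ∨ m = k + 1 := by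
    intro m hm
    have h1 : k ≤ m := Nat.sInf_le hm
    obtain ⟨i, j, hc, rfl⟩ := hm
    obtain ⟨i', j', hc', hk'⟩ := hkmem
    have h2 := gap_le hbal a hc hc'
    omega
  by_cases H : k + 1 ∈ G
  · refine ⟨k, hkpos, ?_⟩
    ext m
    simp only [Set.mem_insert_iff, Set.mem_singleton_iff]
    constructor
    · intro hm; exact hsub m hm
    · rintro (rfl | rfl)
      exacts [hkmem, H]
  · exfalso
    apply hap
    apply const_gap_ep hbal hrec a ha hkpos
    intro i j hc
    have hmem : (j - i) ∈ G := ⟨i, j, hc, rfl⟩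
    rcases hsub _ hmem with h | h
    · exact h
    · rw [h] at hmem; exact absurd hmem H

end BalancedCE
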